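/- arXiv:0705.4256 — 5 statements merged into one kernel-verified Lean document; each statement's English description precedes it below -/
import Mathlib

section
/- Let q be a prime power, F_q the finite field with q elements, and d a positive integer. Let E ⊆ F_q^d, and for t ∈ F_q define ν(t) = |{(x,y) ∈ E × E : x·y = t}|. Then for every t ∈ F_q with t ≠ 0, |ν(t) - |E|²/q| ≤ |E| · q^((d-1)/2). -/
open Finset

section Aux
variable {F : Type*} [Field F] [Fintype F] [DecidableEq F]

private lemma aux_map_sum (ψ : AddChar F ℂ) {ι : Type*} (s : Finset ι) (g : ι → F) :
    ψ (∑ i ∈ s, g i) = ∏ i ∈ s, ψ (g i) := by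
  classical
  induction s using Finset.cons_induction with
  | empty => simp
  | cons a s ha ih => rw [Finset.sum_cons, Finset.prod_cons, AddChar.map_add_eq_mul, ih]

private lemma aux_char_sum (ψ : AddChar F ℂ) (hψ : ψ ≠ 1) (c : F) :
    ∑ s : F, ψ (c * s) = if c = 0 then (Fintype.card F : ℂ) else 0 := by
  split_ifs with h
  · simp [h, Finset.card_univ]
  · have h1 : ψ.mulShift c ≠ 1 := AddChar.IsPrimitive.of_ne_one hψ h
    have := AddChar.sum_eq_zero_of_ne_one h1
    simpa [AddChar.mulShift_apply] using this

private lemma aux_char_sum' (ψ : AddChar F ℂ) (hψ : ψ ≠ 1) (c : F) :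
    ∑ s ∈ univ \ ({0} : Finset F), ψ (c * s) =
      (if c = 0 then (Fintype.card F : ℂ) else 0) - 1 := by
  rw [Finset.sum_sdiff_eq_sub (Finset.subset_univ _), aux_char_sum ψ hψ c]
  simp

private lemma aux_vec_sum (ψ : AddChar F ℂ) (hψ : ψ ≠ 1) {d : ℕ} (v : Fin d → F) :
    ∑ x : Fin d → F, ψ (∑ i, v i * x i) =
      if v = 0 then ((Fintype.card F : ℂ) ^ d) else 0 := by
  have h1 : ∀ x : Fin d → F, ψ (∑ i, v i * x i) = ∏ i, ψ (v i * x i) :=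
    fun x => aux_map_sum ψ _ _
  simp_rw [h1]
  rw [← Fintype.piFinset_univ, Finset.sum_prod_piFinset univ fun i a => ψ (v i * a)]
  simp_rw [aux_char_sum ψ hψ]
  split_ifs with h
  · simp [h, Finset.card_univ]
  · obtain ⟨i, hi⟩ : ∃ i, v i ≠ 0 := by
      by_contra hc; push_neg at hc; exact h (funext hc)
    exact Finset.prod_eq_zero (Finset.mem_univ i) (by simp [hi])

private lemma aux_conj (ψ : AddChar F ℂ) (a : F) :
    (starRingEnd ℂ) (ψ a) = ψ (-a) := by
  have hpos : 0 < ringChar F := (CharP.char_is_prime F (ringChar F)).pos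
  rw [AddChar.starComp_apply hpos, AddChar.inv_apply]

end Aux

open Finset in
/-- For `E ⊆ F_q^d` and `ν(t) = |{(x,y) ∈ E × E : x·y = t}|`, one has
`|ν(t) - |E|²/q| ≤ |E| · q^((d-1)/2)` for every `t ≠ 0`. -/
theorem stmt_9 {F : Type*} [Field F] [Fintype F] [DecidableEq F] (d : ℕ) (hd : 0 < d)
    (E : Finset (Fin d → F)) :
    ∀ t : F, t ≠ 0 →
      |(((E ×ˢ E).filter (fun p => ∑ i, p.1 i * p.2 i = t)).card : ℝ) -
          (E.card : ℝ) ^ 2 / (Fintype.card F : ℝ)| ≤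
        (E.card : ℝ) * (Fintype.card F : ℝ) ^ (((d : ℝ) - 1) / 2) := by
  classical
  intro t ht
  obtain ⟨ψ, hψ1⟩ := (AddChar.exists_apply_ne_zero (a := (1 : F))).mpr one_ne_zero
  have hψ : ψ ≠ 1 := by
    intro h; rw [h] at hψ1; exact hψ1 (AddChar.one_apply _)
  set q : ℕ := Fintype.card F with hqdef
  have hq0 : (0:ℝ) < (q:ℝ) := by
    have : 0 < q := Fintype.card_pos
    exact_mod_cast this
  have hqne : (q:ℝ) ≠ 0 := ne_of_gt hq0
  have hq1 : (1:ℝ) ≤ (q:ℝ) := Nat.one_le_cast.mpr Fintype.card_pos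
  set D : Finset F := univ \ {0} with hDdef
  have hmemD : ∀ s : F, s ∈ D ↔ s ≠ 0 := by intro s; simp [hDdef]
  have h1D : (1:F) ∈ D := (hmemD 1).mpr one_ne_zero
  set ν : ℕ := ((E ×ˢ E).filter (fun p => ∑ i, p.1 i * p.2 i = t)).card with hνdef
  set f : (Fin d → F) → ℂ :=
    fun x => ∑ p ∈ E ×ˢ D, ψ (((∑ i, x i * p.1 i) - t) * p.2) with hfdef
  -- Step A : completing the sum
  have hstepA : ∑ x ∈ E, f x = (q : ℂ) * (ν : ℂ) - (E.card : ℂ)^2 := by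
    have h1 : ∀ x, f x = ∑ y ∈ E, ((if (∑ i, x i * y i) - t = 0 then (q:ℂ) else 0) - 1) := by
      intro x
      simp only [hfdef]
      rw [Finset.sum_product]
      exact Finset.sum_congr rfl fun y _ => aux_char_sum' ψ hψ ((∑ i, x i * y i) - t)
    simp_rw [h1, Finset.sum_sub_distrib, Finset.sum_const, nsmul_eq_mul, mul_one, sub_eq_zero]
    rw [← Finset.sum_product']
    rw [← Finset.sum_filter]
    rw [Finset.sum_const, nsmul_eq_mul, ← hνdef]
    push_cast
    ring
  -- inner x-sum computation
  have hsum_x : ∀ (y y' : Fin d → F) (s : F), ∀ s' ∈ D,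
      (∑ x : Fin d → F, ψ ((((∑ i, x i * y i) - t) * s) + -((((∑ i, x i * y' i) - t) * s')))) =
        (if (fun i => s * s'⁻¹ * y i) = y' then (q:ℂ)^d * ψ (t * (s' - s)) else 0) := by
    intro y y' s s' hs'
    have hs'0 : s' ≠ 0 := (hmemD s').mp hs'
    have harg : ∀ x : Fin d → F,
        ((∑ i, x i * y i) - t) * s + -(((∑ i, x i * y' i) - t) * s') =
          (∑ i, (s * y i - s' * y' i) * x i) + t * (s' - s) := by
      intro x
      have hh : ∑ i, (s * y i - s' * y' i) * x i
          = s * (∑ i, x i * y i) - s' * (∑ i, x i * y' i) := by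
        rw [Finset.mul_sum, Finset.mul_sum, ← Finset.sum_sub_distrib]
        exact Finset.sum_congr rfl fun i _ => by ring
      rw [hh]; ring
    simp_rw [harg, AddChar.map_add_eq_mul]
    rw [← Finset.sum_mul, aux_vec_sum ψ hψ]
    have hcond : ((fun i => s * y i - s' * y' i) = 0) ↔ ((fun i => s * s'⁻¹ * y i) = y') := by
      simp only [funext_iff, Pi.zero_apply]
      refine forall_congr' fun i => ?_
      rw [sub_eq_zero]
      constructor
      · intro h
        field_simp
        exact h
      · intro h
        rw [← h]
        field_simp
    rw [if_congr hcond rfl rfl, ite_mul, zero_mul]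
  -- substitution lemma
  have hsub : ∀ (y : Fin d → F), ∀ s' ∈ D,
      (∑ s ∈ D, if (fun i => s * s'⁻¹ * y i) ∈ E then (q:ℂ)^d * ψ (t * (s' - s)) else 0)
        = ∑ r ∈ D, if (fun i => r * y i) ∈ E then (q:ℂ)^d * ψ ((t * (1 - r)) * s') else 0 := by
    intro y s' hs'
    have hs'0 : s' ≠ 0 := (hmemD s').mp hs'
    refine Finset.sum_nbij' (fun s => s * s'⁻¹) (fun r => r * s') ?_ ?_ ?_ ?_ ?_
    · exact fun a ha => (hmemD _).mpr (mul_ne_zero ((hmemD a).mp ha) (inv_ne_zero hs'0))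
    · exact fun r hr => (hmemD _).mpr (mul_ne_zero ((hmemD r).mp hr) hs'0)
    · intro a ha; field_simp
    · intro r hr; field_simp
    · intro a ha
      have h1 : t * (s' - a) = (t * (1 - a * s'⁻¹)) * s' := by field_simp; try ring
      rw [h1]
  -- Step E : second moment computation
  have hmulconj : ∀ x : Fin d → F, ((‖f x‖:ℂ))^2 = f x * (starRingEnd ℂ) (f x) := by
    intro x
    rw [Complex.mul_conj, Complex.normSq_eq_norm_sq]
    push_cast
    ring
  have hconj : ∀ x, (starRingEnd ℂ) (f x)
      = ∑ p ∈ E ×ˢ D, ψ (-((((∑ i, x i * p.1 i) - t) * p.2))) := by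
    intro x
    simp only [hfdef]
    rw [map_sum]
    exact Finset.sum_congr rfl fun p _ => aux_conj ψ _
  have hT : ((∑ x : Fin d → F, ‖f x‖^2 : ℝ) : ℂ)
      = ∑ y ∈ E, ∑ r ∈ D, (if (fun i => r * y i) ∈ E then
          ((q:ℂ)^d * ((if t * (1 - r) = 0 then (q:ℂ) else 0) - 1)) else 0) := by
    calc ((∑ x : Fin d → F, ‖f x‖^2 : ℝ) : ℂ)
        = ∑ x : Fin d → F, (f x * (starRingEnd ℂ) (f x)) := by
          push_cast
          simp_rw [hmulconj]
      _ = ∑ x : Fin d → F, ∑ p ∈ E ×ˢ D, ∑ p' ∈ E ×ˢ D,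
            ψ ((((∑ i, x i * p.1 i) - t) * p.2) + -((((∑ i, x i * p'.1 i) - t) * p'.2))) := by
          refine Finset.sum_congr rfl fun x _ => ?_
          rw [hconj x]
          simp only [hfdef]
          rw [Finset.sum_mul_sum]
          exact Finset.sum_congr rfl fun p _ => Finset.sum_congr rfl fun p' _ =>
            (AddChar.map_add_eq_mul ψ _ _).symm
      _ = ∑ p ∈ E ×ˢ D, ∑ p' ∈ E ×ˢ D, ∑ x : Fin d → F,
            ψ ((((∑ i, x i * p.1 i) - t) * p.2) + -((((∑ i, x i * p'.1 i) - t) * p'.2))) := by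
          rw [Finset.sum_comm]
          exact Finset.sum_congr rfl fun p _ => Finset.sum_comm
      _ = ∑ p ∈ E ×ˢ D, ∑ p' ∈ E ×ˢ D,
            (if (fun i => p.2 * p'.2⁻¹ * p.1 i) = p'.1 then (q:ℂ)^d * ψ (t * (p'.2 - p.2)) else 0) :=
          Finset.sum_congr rfl fun p hp => Finset.sum_congr rfl fun p' hp' =>
            hsum_x p.1 p'.1 p.2 p'.2 (Finset.mem_product.mp hp').2
      _ = ∑ y ∈ E, ∑ s ∈ D, ∑ y' ∈ E, ∑ s' ∈ D,
            (if (fun i => s * s'⁻¹ * y i) = y' then (q:ℂ)^d * ψ (t * (s' - s)) else 0) := by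
          simp only [Finset.sum_product]
      _ = ∑ y ∈ E, ∑ s ∈ D, ∑ s' ∈ D,
            (if (fun i => s * s'⁻¹ * y i) ∈ E then (q:ℂ)^d * ψ (t * (s' - s)) else 0) := by
          refine Finset.sum_congr rfl fun y _ => Finset.sum_congr rfl fun s _ => ?_
          rw [Finset.sum_comm]
          exact Finset.sum_congr rfl fun s' _ => Finset.sum_ite_eq E _ _
      _ = ∑ y ∈ E, ∑ s' ∈ D, ∑ r ∈ D,
            (if (fun i => r * y i) ∈ E then (q:ℂ)^d * ψ ((t * (1 - r)) * s') else 0) := by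
          refine Finset.sum_congr rfl fun y _ => ?_
          rw [Finset.sum_comm]
          exact Finset.sum_congr rfl fun s' hs' => hsub y s' hs'
      _ = ∑ y ∈ E, ∑ r ∈ D, ∑ s' ∈ D,
            (if (fun i => r * y i) ∈ E then (q:ℂ)^d * ψ ((t * (1 - r)) * s') else 0) := by
          exact Finset.sum_congr rfl fun y _ => Finset.sum_comm
      _ = ∑ y ∈ E, ∑ r ∈ D, (if (fun i => r * y i) ∈ E then
            ((q:ℂ)^d * ((if t * (1 - r) = 0 then (q:ℂ) else 0) - 1)) else 0) := by
          refine Finset.sum_congr rfl fun y _ => Finset.sum_congr rfl fun r hr => ?_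
          by_cases hC : (fun i => r * y i) ∈ E
          · simp only [if_pos hC]
            rw [← Finset.mul_sum, aux_char_sum' ψ hψ (t * (1 - r))]
          · simp only [if_neg hC, Finset.sum_const_zero]
  -- real version
  have hTreal : (∑ x : Fin d → F, ‖f x‖^2)
      = ∑ y ∈ E, ∑ r ∈ D, (if (fun i => r * y i) ∈ E then
          ((q:ℝ)^d * ((if t * (1 - r) = 0 then (q:ℝ) else 0) - 1)) else 0) := by
    apply Complex.ofReal_injective
    rw [hT]
    push_cast [apply_ite Complex.ofReal]
    rfl
  -- bound the second moment
  have hE1 : (∑ x : Fin d → F, ‖f x‖^2) ≤ (E.card : ℝ) * (q:ℝ)^(d+1) := by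
    rw [hTreal]
    have hstep : ∀ y ∈ E, (∑ r ∈ D, (if (fun i => r * y i) ∈ E then
        ((q:ℝ)^d * ((if t * (1 - r) = 0 then (q:ℝ) else 0) - 1)) else 0))
          ≤ (q:ℝ)^d * ((q:ℝ) - 1) := by
      intro y _
      have h1 : ∀ r ∈ D, (if (fun i => r * y i) ∈ E then
          ((q:ℝ)^d * ((if t * (1 - r) = 0 then (q:ℝ) else 0) - 1)) else 0)
            ≤ (if r = 1 then (q:ℝ)^d * ((q:ℝ) - 1) else 0) := by
        intro r _
        by_cases hr1 : r = 1
        · subst hr1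
          simp only [if_pos rfl, sub_self, mul_zero, if_pos rfl]
          split_ifs with hC
          · apply le_of_eq; norm_num
          · nlinarith [pow_pos hq0 d]
        · have hne : t * (1 - r) ≠ 0 :=
            mul_ne_zero ht (sub_ne_zero.mpr fun h => hr1 h.symm)
          simp only [if_neg hr1, if_neg hne]
          split_ifs with hC
          · nlinarith [pow_pos hq0 d]
          · exact le_rfl
      calc (∑ r ∈ D, _) ≤ ∑ r ∈ D, (if r = 1 then (q:ℝ)^d * ((q:ℝ) - 1) else 0) :=
            Finset.sum_le_sum h1
        _ = (q:ℝ)^d * ((q:ℝ) - 1) := by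
            rw [Finset.sum_ite_eq' D 1 (fun _ => (q:ℝ)^d * ((q:ℝ) - 1)), if_pos h1D]
    calc (∑ y ∈ E, _) ≤ ∑ y ∈ E, (q:ℝ)^d * ((q:ℝ) - 1) := Finset.sum_le_sum hstep
      _ = (E.card : ℝ) * ((q:ℝ)^d * ((q:ℝ) - 1)) := by
          rw [Finset.sum_const, nsmul_eq_mul]
      _ ≤ (E.card : ℝ) * (q:ℝ)^(d+1) := by
          have : (q:ℝ)^d * ((q:ℝ) - 1) ≤ (q:ℝ)^(d+1) := by
            rw [pow_succ]
            nlinarith [pow_pos hq0 d]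
          exact mul_le_mul_of_nonneg_left this (Nat.cast_nonneg _)
  -- Cauchy-Schwarz
  have hR2 : ‖∑ x ∈ E, f x‖^2 ≤ (E.card:ℝ)^2 * (q:ℝ)^(d+1) := by
    have h1 : ‖∑ x ∈ E, f x‖ ≤ ∑ x ∈ E, ‖f x‖ := norm_sum_le _ _
    have h2 : (∑ x ∈ E, ‖f x‖)^2 ≤ (E.card:ℝ) * ∑ x ∈ E, ‖f x‖^2 := by
      simpa using sq_sum_le_card_mul_sum_sq (s := E) (f := fun x => ‖f x‖)
    have h3 : (∑ x ∈ E, ‖f x‖^2) ≤ ∑ x : Fin d → F, ‖f x‖^2 :=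
      Finset.sum_le_sum_of_subset_of_nonneg (Finset.subset_univ E)
        (fun _ _ _ => sq_nonneg _)
    calc ‖∑ x ∈ E, f x‖^2 ≤ (∑ x ∈ E, ‖f x‖)^2 := by
          apply pow_le_pow_left₀ (norm_nonneg _) h1
      _ ≤ (E.card:ℝ) * ∑ x ∈ E, ‖f x‖^2 := h2
      _ ≤ (E.card:ℝ) * ((E.card:ℝ) * (q:ℝ)^(d+1)) := by
          apply mul_le_mul_of_nonneg_left (le_trans h3 hE1) (Nat.cast_nonneg _)
      _ = (E.card:ℝ)^2 * (q:ℝ)^(d+1) := by ring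
  -- assemble
  have hRr : (∑ x ∈ E, f x) = (((q:ℝ) * (ν:ℝ) - (E.card:ℝ)^2 : ℝ) : ℂ) := by
    rw [hstepA]; push_cast; ring
  have hnorm : ‖∑ x ∈ E, f x‖ = |(q:ℝ) * (ν:ℝ) - (E.card:ℝ)^2| := by
    rw [hRr, Complex.norm_real, Real.norm_eq_abs]
  have hpow2 : ((E.card:ℝ) * (q:ℝ) ^ (((d:ℝ)+1)/2))^2 = (E.card:ℝ)^2 * (q:ℝ)^(d+1) := by
    rw [mul_pow, ← Real.rpow_natCast ((q:ℝ) ^ (((d:ℝ)+1)/2)) 2, ← Real.rpow_mul hq0.le]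
    rw [show (((d:ℝ)+1)/2) * (2:ℕ) = ((d:ℝ)+1) by push_cast; ring]
    rw [show ((d:ℝ)+1) = ((d+1 : ℕ) : ℝ) by push_cast; ring, Real.rpow_natCast]
  have habs : |(q:ℝ) * (ν:ℝ) - (E.card:ℝ)^2| ≤ (E.card:ℝ) * (q:ℝ) ^ (((d:ℝ)+1)/2) := by
    rw [← hnorm]
    have h4 : ‖∑ x ∈ E, f x‖^2 ≤ ((E.card:ℝ) * (q:ℝ) ^ (((d:ℝ)+1)/2))^2 := by
      rw [hpow2]; exact hR2
    have h5 : (0:ℝ) ≤ (E.card:ℝ) * (q:ℝ) ^ (((d:ℝ)+1)/2) := by positivity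
    nlinarith [norm_nonneg (∑ x ∈ E, f x)]
  have hsplit : (ν:ℝ) - (E.card:ℝ)^2/(q:ℝ) = ((q:ℝ) * (ν:ℝ) - (E.card:ℝ)^2)/(q:ℝ) := by
    field_simp
  rw [hsplit, abs_div, abs_of_pos hq0, div_le_iff₀ hq0]
  calc |(q:ℝ) * (ν:ℝ) - (E.card:ℝ)^2| ≤ (E.card:ℝ) * (q:ℝ) ^ (((d:ℝ)+1)/2) := habs
    _ = (E.card:ℝ) * (q:ℝ) ^ (((d:ℝ)-1)/2) * (q:ℝ) := by
        rw [show (((d:ℝ)+1)/2) = ((d:ℝ)-1)/2 + 1 by ring, Real.rpow_add_one hqne, ← mul_assoc]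
end

section
/- Let q be a prime power, F_q the finite field with q elements, and d a positive integer. Let E ⊆ F_q^d with |E| > q^((d+1)/2). Then for every t ∈ F_q with t ≠ 0, the number of pairs ν(t) = |{(x,y) ∈ E × E : x·y = t}| satisfies ν(t) ≥ |E|²/q - |E|·q^((d-1)/2) > 0. -/
open Finset

section aux

variable {F : Type*} [Field F] [Fintype F] [DecidableEq F]

private lemma addChar_map_sum {M : Type*} [CommMonoid M] (ψ : AddChar F M) {ι : Type*}
    (s : Finset ι) (f : ι → F) : ψ (∑ i ∈ s, f i) = ∏ i ∈ s, ψ (f i) := by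
  induction s using Finset.cons_induction with
  | empty => simp
  | cons a s ha ih => rw [Finset.sum_cons, Finset.prod_cons, AddChar.map_add_eq_mul, ih]

private lemma sum_char_dot {d : ℕ} (ψ : AddChar F ℂ) (hψ : ψ.IsPrimitive) (v : Fin d → F) :
    ∑ x : Fin d → F, ψ (∑ i, x i * v i) =
      if v = 0 then ((Fintype.card F : ℂ)) ^ d else 0 := by
  simp_rw [addChar_map_sum ψ Finset.univ]
  have step : ∑ x : Fin d → F, ∏ i, ψ (x i * v i) = ∏ i, ∑ a : F, ψ (a * v i) :=
    (Fintype.prod_sum fun i a => ψ (a * v i)).symm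
  rw [step]
  have h : ∀ i : Fin d, ∑ a : F, ψ (a * v i) =
      if v i = 0 then (Fintype.card F : ℂ) else 0 := by
    intro i
    rw [AddChar.sum_mulShift _ hψ]
    split_ifs <;> simp
  simp_rw [h]
  by_cases hv : v = 0
  · simp [hv]
  · obtain ⟨i, hi⟩ := Function.ne_iff.mp hv
    have hi' : v i ≠ 0 := by simpa using hi
    rw [if_neg hv]
    exact Finset.prod_eq_zero (Finset.mem_univ i) (by simp [hi'])

private lemma sum_char_units (ψ : AddChar F ℂ) (hψ : ψ.IsPrimitive) (b : F) :
    ∑ s ∈ Finset.univ.erase (0 : F), ψ (s * b) =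
      (if b = 0 then (Fintype.card F : ℂ) else 0) - 1 := by
  have h := Finset.sum_erase_add Finset.univ (fun s => ψ (s * b)) (Finset.mem_univ (0 : F))
  rw [AddChar.sum_mulShift _ hψ] at h
  simp only [zero_mul, AddChar.map_zero_eq_one, Nat.cast_ite, Nat.cast_zero] at h
  exact eq_sub_of_add_eq h

private lemma sum_comm4 {α β γ δ M : Type*} [AddCommMonoid M]
    (s : Finset α) (t : Finset β) (u : Finset γ) (v : Finset δ) (g : α → β → γ → δ → M) :
    ∑ a ∈ s, ∑ b ∈ t, ∑ c ∈ u, ∑ e ∈ v, g a b c e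
      = ∑ c ∈ u, ∑ b ∈ t, ∑ a ∈ s, ∑ e ∈ v, g a b c e :=
  calc ∑ a ∈ s, ∑ b ∈ t, ∑ c ∈ u, ∑ e ∈ v, g a b c e
      = ∑ b ∈ t, ∑ a ∈ s, ∑ c ∈ u, ∑ e ∈ v, g a b c e := Finset.sum_comm
    _ = ∑ b ∈ t, ∑ c ∈ u, ∑ a ∈ s, ∑ e ∈ v, g a b c e :=
        Finset.sum_congr rfl fun b _ => Finset.sum_comm
    _ = ∑ c ∈ u, ∑ b ∈ t, ∑ a ∈ s, ∑ e ∈ v, g a b c e := Finset.sum_comm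

end aux

set_option maxHeartbeats 4000000 in
open Finset in
/-- If `E ⊆ F_q^d` with `|E| > q^((d+1)/2)`, then for every nonzero `t`,
`ν(t) ≥ |E|²/q - |E|·q^((d-1)/2) > 0`. -/
theorem stmt_10 {F : Type*} [Field F] [Fintype F] [DecidableEq F] (d : ℕ) (hd : 0 < d)
    (E : Finset (Fin d → F))
    (hE : (E.card : ℝ) > (Fintype.card F : ℝ) ^ (((d : ℝ) + 1) / 2)) :
    ∀ t : F, t ≠ 0 →
      (((E ×ˢ E).filter (fun p => ∑ i, p.1 i * p.2 i = t)).card : ℝ) ≥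
          (E.card : ℝ) ^ 2 / (Fintype.card F : ℝ) -
            (E.card : ℝ) * (Fintype.card F : ℝ) ^ (((d : ℝ) - 1) / 2) ∧
        (E.card : ℝ) ^ 2 / (Fintype.card F : ℝ) -
          (E.card : ℝ) * (Fintype.card F : ℝ) ^ (((d : ℝ) - 1) / 2) > 0 := by
  intro t ht
  classical
  have hq2 : 1 < Fintype.card F := Fintype.one_lt_card
  set q : ℕ := Fintype.card F with hqdef
  set n : ℕ := E.card with hndef
  have hq0 : (0 : ℝ) < (q : ℝ) := by
    have : 0 < q := by omega
    exact_mod_cast this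
  have hn0 : (0 : ℝ) < (n : ℝ) := lt_of_le_of_lt (Real.rpow_nonneg hq0.le _) hE
  have hsub : (q : ℝ) ^ (((d : ℝ) - 1) / 2) = (q : ℝ) ^ (((d : ℝ) + 1) / 2) / (q : ℝ) := by
    rw [show ((d : ℝ) - 1) / 2 = ((d : ℝ) + 1) / 2 - 1 by ring, Real.rpow_sub hq0,
      Real.rpow_one]
  have hpos : (n : ℝ) ^ 2 / (q : ℝ) - (n : ℝ) * (q : ℝ) ^ (((d : ℝ) - 1) / 2) > 0 := by
    rw [hsub, show (n : ℝ) ^ 2 / (q : ℝ) - (n : ℝ) * ((q : ℝ) ^ (((d : ℝ) + 1) / 2) / (q : ℝ))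
        = ((n : ℝ) ^ 2 - (n : ℝ) * (q : ℝ) ^ (((d : ℝ) + 1) / 2)) / (q : ℝ) by ring]
    apply div_pos _ hq0
    nlinarith [hE, hn0]
  refine ⟨?_, hpos⟩
  -- Character sum machinery
  set ψ : AddChar F ℂ := AddChar.FiniteField.primitiveChar_to_Complex F with hψdef
  have hψ : ψ.IsPrimitive := AddChar.FiniteField.primitiveChar_to_Complex_isPrimitive F
  have hchar : 0 < ringChar F := Nat.pos_of_ne_zero (CharP.ringChar_ne_zero_of_finite F)
  have hconj : ∀ a : F, (starRingEnd ℂ) (ψ a) = ψ (-a) := fun a => by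
    rw [AddChar.starComp_apply hchar, AddChar.inv_apply]
  set U : Finset F := Finset.univ.erase 0 with hU
  set ν : ℕ := ((E ×ˢ E).filter (fun p => ∑ i, p.1 i * p.2 i = t)).card with hν
  set f : (Fin d → F) → ℂ :=
    fun x => ∑ s ∈ U, ∑ y ∈ E, ψ (s * ((∑ i, x i * y i) - t)) with hf
  set R : ℂ := ∑ x ∈ E, f x with hR
  -- Key identity : q ν = n² + R
  have key : (q : ℂ) * (ν : ℂ) = ((n * n : ℕ) : ℂ) + R := by
    have h1 : ∀ p : (Fin d → F) × (Fin d → F),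
        ∑ s : F, ψ (s * ((∑ i, p.1 i * p.2 i) - t))
          = if (∑ i, p.1 i * p.2 i) = t then (q : ℂ) else 0 := by
      intro p
      rw [AddChar.sum_mulShift _ hψ, Nat.cast_ite, Nat.cast_zero]
      simp [sub_eq_zero]
      rfl
    have h2 : ∑ p ∈ E ×ˢ E, ∑ s : F, ψ (s * ((∑ i, p.1 i * p.2 i) - t)) = (q : ℂ) * ν := by
      simp_rw [h1]
      rw [← Finset.sum_filter, Finset.sum_const, nsmul_eq_mul]
      rw [hν, mul_comm]
    have h4 : ∀ b : F, ∑ s : F, ψ (s * b) = 1 + ∑ s ∈ U, ψ (s * b) := by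
      intro b
      rw [← Finset.sum_erase_add Finset.univ (fun s => ψ (s * b)) (Finset.mem_univ (0 : F)),
        zero_mul, AddChar.map_zero_eq_one, add_comm]
    have h5 : ∑ p ∈ E ×ˢ E, ∑ s : F, ψ (s * ((∑ i, p.1 i * p.2 i) - t))
        = ((n * n : ℕ) : ℂ) + R := by
      have e : ∀ p ∈ E ×ˢ E, ∑ s : F, ψ (s * ((∑ i, p.1 i * p.2 i) - t))
          = 1 + ∑ s ∈ U, ψ (s * ((∑ i, p.1 i * p.2 i) - t)) := fun p _ => h4 _
      rw [Finset.sum_congr rfl e, Finset.sum_add_distrib, Finset.sum_const,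
        Finset.card_product, nsmul_eq_mul, mul_one]
      have hRR : ∑ p ∈ E ×ˢ E, ∑ s ∈ U, ψ (s * ((∑ i, p.1 i * p.2 i) - t)) = R := by
        rw [hR]
        simp only [hf]
        rw [Finset.sum_product]
        exact Finset.sum_congr rfl fun x _ => Finset.sum_comm
      rw [hRR]
    rw [← h2, h5]
  -- linear algebra in dot products
  have dot_lin : ∀ (x y y' : Fin d → F) (s s' : F),
      ∑ i, x i * (s * y i - s' * y' i)
        = s * (∑ i, x i * y i) - s' * (∑ i, x i * y' i) := by
    intro x y y' s s'
    rw [Finset.mul_sum, Finset.mul_sum, ← Finset.sum_sub_distrib]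
    exact Finset.sum_congr rfl fun i _ => by ring
  -- Expansion of |f x|²
  have hstep : ∀ x : Fin d → F, (Complex.normSq (f x) : ℂ)
      = ∑ s ∈ U, ∑ s' ∈ U, ∑ y ∈ E, ∑ y' ∈ E,
          ψ (∑ i, x i * (s * y i - s' * y' i)) * ψ (t * (s' - s)) := by
    intro x
    have hc : (starRingEnd ℂ) (f x)
        = ∑ s' ∈ U, ∑ y' ∈ E, ψ (-(s' * ((∑ i, x i * y' i) - t))) := by
      rw [hf]
      simp only [map_sum]
      simp_rw [hconj]
    rw [← Complex.mul_conj (f x), hc]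
    simp only [hf]
    rw [Finset.sum_mul_sum]
    refine Finset.sum_congr rfl fun s hs => ?_
    refine Finset.sum_congr rfl fun s' hs' => ?_
    rw [Finset.sum_mul_sum]
    refine Finset.sum_congr rfl fun y hy => ?_
    refine Finset.sum_congr rfl fun y' hy' => ?_
    rw [← AddChar.map_add_eq_mul, ← AddChar.map_add_eq_mul]
    congr 1
    rw [dot_lin]
    ring
  set T : ℝ := ∑ x : Fin d → F, Complex.normSq (f x) with hT
  -- the reindexed real sum
  set Sr : ℝ := ∑ y ∈ E, ∑ r ∈ U,
      (if (fun i => r * y i) ∈ E then ((if r = (1 : F) then (q : ℝ) else 0) - 1) else 0)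
    with hSr
  have hTexp : (T : ℂ) = ∑ s ∈ U, ∑ s' ∈ U, ∑ y ∈ E, ∑ y' ∈ E,
      (if (fun i => s * y i - s' * y' i) = (0 : Fin d → F) then (q : ℂ) ^ d else 0)
        * ψ (t * (s' - s)) := by
    rw [hT]
    push_cast
    simp_rw [hstep]
    rw [Finset.sum_comm]
    refine Finset.sum_congr rfl fun s _ => ?_
    rw [Finset.sum_comm]
    refine Finset.sum_congr rfl fun s' _ => ?_
    rw [Finset.sum_comm]
    refine Finset.sum_congr rfl fun y _ => ?_
    rw [Finset.sum_comm]
    refine Finset.sum_congr rfl fun y' _ => ?_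
    rw [← Finset.sum_mul]
    congr 1
    exact sum_char_dot ψ hψ (fun i => s * y i - s' * y' i)
  -- pull out q^d
  have hpull : ∀ (c : Prop) [Decidable c] (B : ℂ),
      (if c then (q : ℂ) ^ d else 0) * B = (q : ℂ) ^ d * (if c then B else 0) := by
    intro c _ B; split_ifs <;> ring
  have hTexp2 : (T : ℂ) = (q : ℂ) ^ d * ∑ s ∈ U, ∑ s' ∈ U, ∑ y ∈ E, ∑ y' ∈ E,
      (if (fun i => s * y i - s' * y' i) = (0 : Fin d → F) then ψ (t * (s' - s)) else 0) := by
    rw [hTexp]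
    simp_rw [hpull, ← Finset.mul_sum]
  -- reorder and reindex the sum
  have hord : ∑ s ∈ U, ∑ s' ∈ U, ∑ y ∈ E, ∑ y' ∈ E,
      (if (fun i => s * y i - s' * y' i) = (0 : Fin d → F) then ψ (t * (s' - s)) else 0)
      = ∑ y ∈ E, ∑ s' ∈ U, ∑ s ∈ U, ∑ y' ∈ E,
      (if (fun i => s * y i - s' * y' i) = (0 : Fin d → F) then ψ (t * (s' - s)) else 0) :=
    sum_comm4 U U E E _
  have hinner : ∀ y ∈ E, ∀ s' ∈ U,
      ∑ s ∈ U, ∑ y' ∈ E,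
        (if (fun i => s * y i - s' * y' i) = (0 : Fin d → F) then ψ (t * (s' - s)) else 0)
      = ∑ r ∈ U, (if (fun i => r * y i) ∈ E then ψ (s' * (t * (1 - r))) else 0) := by
    intro y _ s' hs'
    have hs'0 : s' ≠ 0 := (Finset.mem_erase.mp hs').1
    refine Finset.sum_nbij' (i := fun s => s * s'⁻¹) (j := fun r => r * s') ?_ ?_ ?_ ?_ ?_
    · intro a ha
      have ha0 : a ≠ 0 := (Finset.mem_erase.mp ha).1
      exact Finset.mem_erase.mpr ⟨mul_ne_zero ha0 (inv_ne_zero hs'0), Finset.mem_univ _⟩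
    · intro a ha
      have ha0 : a ≠ 0 := (Finset.mem_erase.mp ha).1
      exact Finset.mem_erase.mpr ⟨mul_ne_zero ha0 hs'0, Finset.mem_univ _⟩
    · intro a ha; field_simp
    · intro a ha; field_simp
    · intro s hs
      have hs0 : s ≠ 0 := (Finset.mem_erase.mp hs).1
      have hcond : ∀ y' : Fin d → F,
          ((fun i => s * y i - s' * y' i) = (0 : Fin d → F))
            ↔ ((fun i => (s * s'⁻¹) * y i) = y') := by
        intro y'
        rw [funext_iff, funext_iff]
        refine forall_congr' fun i => ?_
        rw [Pi.zero_apply, sub_eq_zero]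
        constructor
        · intro h
          field_simp
          rw [h]
        · intro h
          rw [← h]; field_simp
      simp_rw [hcond]
      rw [Finset.sum_ite_eq E (fun i => (s * s'⁻¹) * y i) (fun _ => ψ (t * (s' - s)))]
      congr 1
      congr 1
      field_simp
  have hSc : ∑ s ∈ U, ∑ s' ∈ U, ∑ y ∈ E, ∑ y' ∈ E,
      (if (fun i => s * y i - s' * y' i) = (0 : Fin d → F) then ψ (t * (s' - s)) else 0)
      = (Sr : ℂ) := by
    rw [hord]
    have h6 : ∀ y ∈ E, ∑ s' ∈ U, ∑ s ∈ U, ∑ y' ∈ E,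
        (if (fun i => s * y i - s' * y' i) = (0 : Fin d → F) then ψ (t * (s' - s)) else 0)
        = ∑ r ∈ U, (if (fun i => r * y i) ∈ E
            then ((if r = (1 : F) then (q : ℂ) else 0) - 1) else 0) := by
      intro y hy
      rw [Finset.sum_congr rfl (fun s' hs' => hinner y hy s' hs'), Finset.sum_comm]
      refine Finset.sum_congr rfl fun r hr => ?_
      by_cases hcE : (fun i => r * y i) ∈ E
      · simp only [hcE, if_true]
        rw [sum_char_units ψ hψ (t * (1 - r))]
        congr 1
        have : t * (1 - r) = 0 ↔ r = 1 := by
          rw [mul_eq_zero]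
          constructor
          · rintro (h | h)
            · exact absurd h ht
            · exact (sub_eq_zero.mp h).symm
          · intro h; right; rw [h]; ring
        simp_rw [this]
        rfl
      · simp only [hcE, if_false]
        simp
    rw [Finset.sum_congr rfl h6, hSr]
    push_cast
    refine Finset.sum_congr rfl fun y _ => Finset.sum_congr rfl fun r _ => ?_
    split_ifs <;> simp
  have hTSr : T = (q : ℝ) ^ d * Sr := by
    have h := hTexp2.trans (by rw [hSc])
    have h2 : (T : ℂ) = (((q : ℝ) ^ d * Sr : ℝ) : ℂ) := by
      rw [h]; push_cast; ring
    exact_mod_cast h2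
  -- bound on Sr
  have hSr_le : Sr ≤ (q : ℝ) * (n : ℝ) := by
    rw [hSr]
    have hyb : ∀ y ∈ E, ∑ r ∈ U,
        (if (fun i => r * y i) ∈ E then ((if r = (1 : F) then (q : ℝ) else 0) - 1) else 0)
        ≤ (q : ℝ) := by
      intro y _
      calc ∑ r ∈ U,
          (if (fun i => r * y i) ∈ E then ((if r = (1 : F) then (q : ℝ) else 0) - 1) else 0)
          ≤ ∑ r ∈ U, (if r = (1 : F) then (q : ℝ) else 0) := by
            apply Finset.sum_le_sum
            intro r _
            split_ifs <;> linarith [hq0.le]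
        _ = (if (1 : F) ∈ U then (q : ℝ) else 0) := Finset.sum_ite_eq' U 1 (fun _ => (q : ℝ))
        _ ≤ (q : ℝ) := by
            split_ifs <;> linarith [hq0.le]
    calc ∑ y ∈ E, ∑ r ∈ U,
        (if (fun i => r * y i) ∈ E then ((if r = (1 : F) then (q : ℝ) else 0) - 1) else 0)
        ≤ ∑ _y ∈ E, (q : ℝ) := Finset.sum_le_sum hyb
      _ = (n : ℝ) * (q : ℝ) := by rw [Finset.sum_const, nsmul_eq_mul, hndef]
      _ = (q : ℝ) * (n : ℝ) := by ring
  have hT_le : T ≤ (q : ℝ) ^ (d + 1) * (n : ℝ) := by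
    have hqd : (0 : ℝ) ≤ (q : ℝ) ^ d := by positivity
    rw [hTSr, pow_succ]
    calc (q : ℝ) ^ d * Sr ≤ (q : ℝ) ^ d * ((q : ℝ) * (n : ℝ)) :=
          mul_le_mul_of_nonneg_left hSr_le hqd
      _ = (q : ℝ) ^ d * (q : ℝ) * (n : ℝ) := by ring
  -- Cauchy–Schwarz
  have hnormf : ‖R‖ ^ 2 ≤ (n : ℝ) * T := by
    have h1 : ‖R‖ ≤ ∑ x ∈ E, ‖f x‖ := by rw [hR]; exact norm_sum_le _ _
    have h2 : (∑ x ∈ E, ‖f x‖) ^ 2 ≤ (n : ℝ) * ∑ x ∈ E, ‖f x‖ ^ 2 := by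
      have := Finset.sum_mul_sq_le_sq_mul_sq E (fun _ => (1 : ℝ)) (fun x => ‖f x‖)
      simpa [hndef] using this
    have h3 : ∑ x ∈ E, ‖f x‖ ^ 2 ≤ T := by
      have hns : ∀ z : ℂ, ‖z‖ ^ 2 = Complex.normSq z := fun z => by
        rw [Complex.sq_norm]
      simp_rw [hns]
      rw [hT]
      exact Finset.sum_le_sum_of_subset_of_nonneg (Finset.subset_univ E)
        (fun i _ _ => Complex.normSq_nonneg _)
    calc ‖R‖ ^ 2 ≤ (∑ x ∈ E, ‖f x‖) ^ 2 := by
          apply pow_le_pow_left₀ (norm_nonneg R) h1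
      _ ≤ (n : ℝ) * ∑ x ∈ E, ‖f x‖ ^ 2 := h2
      _ ≤ (n : ℝ) * T := mul_le_mul_of_nonneg_left h3 hn0.le
  have hXX : ((q : ℝ) ^ (((d : ℝ) + 1) / 2)) ^ 2 = (q : ℝ) ^ (d + 1) := by
    rw [← Real.rpow_natCast ((q : ℝ) ^ (((d : ℝ) + 1) / 2)) 2, ← Real.rpow_mul hq0.le,
      ← Real.rpow_natCast (q : ℝ) (d + 1)]
    congr 1
    push_cast
    ring
  have hRnorm : ‖R‖ ≤ (n : ℝ) * (q : ℝ) ^ (((d : ℝ) + 1) / 2) := by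
    have hb0 : (0 : ℝ) ≤ (n : ℝ) * (q : ℝ) ^ (((d : ℝ) + 1) / 2) := by positivity
    have hsq : ‖R‖ ^ 2 ≤ ((n : ℝ) * (q : ℝ) ^ (((d : ℝ) + 1) / 2)) ^ 2 := by
      calc ‖R‖ ^ 2 ≤ (n : ℝ) * T := hnormf
        _ ≤ (n : ℝ) * ((q : ℝ) ^ (d + 1) * (n : ℝ)) :=
            mul_le_mul_of_nonneg_left hT_le hn0.le
        _ = ((n : ℝ) * (q : ℝ) ^ (((d : ℝ) + 1) / 2)) ^ 2 := by
            rw [mul_pow, hXX]; ring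
    calc ‖R‖ = Real.sqrt (‖R‖ ^ 2) := (Real.sqrt_sq (norm_nonneg R)).symm
      _ ≤ Real.sqrt (((n : ℝ) * (q : ℝ) ^ (((d : ℝ) + 1) / 2)) ^ 2) := Real.sqrt_le_sqrt hsq
      _ = (n : ℝ) * (q : ℝ) ^ (((d : ℝ) + 1) / 2) := Real.sqrt_sq hb0
  -- take real parts of the key identity
  have hre : (q : ℝ) * (ν : ℝ) = ((n * n : ℕ) : ℝ) + R.re := by
    have h := congrArg Complex.re key
    simpa [Complex.mul_re] using h
  have hre2 : R.re ≥ -((n : ℝ) * (q : ℝ) ^ (((d : ℝ) + 1) / 2)) := by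
    have h1 : |R.re| ≤ ‖R‖ := by
      exact Complex.abs_re_le_norm R
    have h2 : -|R.re| ≤ R.re := neg_abs_le R.re
    linarith
  -- conclude
  rw [ge_iff_le, hsub,
    show (n : ℝ) ^ 2 / (q : ℝ) - (n : ℝ) * ((q : ℝ) ^ (((d : ℝ) + 1) / 2) / (q : ℝ))
      = ((n : ℝ) ^ 2 - (n : ℝ) * (q : ℝ) ^ (((d : ℝ) + 1) / 2)) / (q : ℝ) by ring,
    div_le_iff₀ hq0]
  push_cast at hre
  nlinarith [hre, hre2]
end

section
/- Let q be a prime power, F_q the finite field with q elements, d a positive integer, and let C_geom > 0 and 0 ≤ α ≤ d be real numbers. Let E ⊆ F_q^d with 0 ∉ E be such that |E ∩ l_y| ≤ C_geom · q^(α/d) for every y ∈ F_q^d with y ≠ 0, where l_y = {t·y : t ∈ F_q}. Then |{x·y : x, y ∈ E}| ≥ q · |E|² / (C_geom · q^(d + α/d) + |E|²). -/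
set_option maxHeartbeats 1000000

open Finset Complex

section auxstmt11

variable {F : Type*} [Field F] [Fintype F] [DecidableEq F]

private lemma aux11_conj (ψ : AddChar F ℂ) (u : F) :
    (starRingEnd ℂ) (ψ u) = ψ (-u) := by
  have h : 0 < ringChar F :=
    Nat.pos_of_ne_zero (CharP.ringChar_ne_zero_of_finite F)
  rw [AddChar.starComp_apply h, AddChar.inv_apply]

private lemma aux11_sum (ψ : AddChar F ℂ) (hψ : ψ.IsPrimitive) (a : F) :
    ∑ s : F, ψ (s * a) = if a = 0 then (Fintype.card F : ℂ) else 0 := by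
  rw [AddChar.sum_mulShift a hψ]
  split_ifs <;> simp

private lemma aux11_map_sum {ι : Type*} [DecidableEq ι] (ψ : AddChar F ℂ)
    (s : Finset ι) (f : ι → F) :
    ψ (∑ i ∈ s, f i) = ∏ i ∈ s, ψ (f i) := by
  induction s using Finset.induction with
  | empty => simp
  | insert _ _ h ih => rw [Finset.sum_insert h, Finset.prod_insert h,
      AddChar.map_add_eq_mul, ih]

private lemma aux11_vec (d : ℕ) (ψ : AddChar F ℂ) (hψ : ψ.IsPrimitive) (w : Fin d → F)
    (hw : w ≠ 0) : ∑ z : Fin d → F, ψ (∑ i, z i * w i) = 0 := by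
  have h1 : ∀ z : Fin d → F, ψ (∑ i, z i * w i) = ∏ i, ψ (z i * w i) :=
    fun z => aux11_map_sum ψ _ _
  have h2 : ∑ z : Fin d → F, ∏ i, ψ (z i * w i) = ∏ i, ∑ t : F, ψ (t * w i) := by
    rw [Finset.prod_univ_sum]
    rw [Fintype.piFinset_univ]
  rw [funext h1, h2]
  obtain ⟨i, hi⟩ := Function.ne_iff.mp hw
  refine Finset.prod_eq_zero (Finset.mem_univ i) ?_
  rw [aux11_sum ψ hψ, if_neg (by simpa using hi)]

private lemma aux11_parseval (d : ℕ) (ψ : AddChar F ℂ) (hψ : ψ.IsPrimitive)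
    (E : Finset (Fin d → F)) :
    ∑ z : Fin d → F, Complex.normSq (∑ y ∈ E, ψ (∑ i, z i * y i)) =
      (Fintype.card F : ℝ) ^ d * E.card := by
  have key : ∑ z : Fin d → F, ((∑ y ∈ E, ψ (∑ i, z i * y i)) *
      (starRingEnd ℂ) (∑ y ∈ E, ψ (∑ i, z i * y i))) =
      ((Fintype.card F : ℂ)) ^ d * E.card := by
    have expand : ∀ z : Fin d → F, ((∑ y ∈ E, ψ (∑ i, z i * y i)) *
        (starRingEnd ℂ) (∑ y ∈ E, ψ (∑ i, z i * y i))) =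
        ∑ y ∈ E, ∑ y' ∈ E, ψ (∑ i, z i * (y i - y' i)) := by
      intro z
      rw [map_sum, Finset.sum_mul_sum]
      refine Finset.sum_congr rfl fun y _ => Finset.sum_congr rfl fun y' _ => ?_
      rw [aux11_conj, ← AddChar.map_add_eq_mul]
      congr 1
      rw [← Finset.sum_neg_distrib, ← Finset.sum_add_distrib]
      exact Finset.sum_congr rfl fun i _ => by ring
    rw [funext expand, Finset.sum_comm]
    have swap : ∀ y ∈ E, ∑ z : Fin d → F, ∑ y' ∈ E, ψ (∑ i, z i * (y i - y' i)) =
        ((Fintype.card F : ℂ)) ^ d := by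
      intro y hy
      rw [Finset.sum_comm]
      have inner : ∀ y' : Fin d → F, ∑ z : Fin d → F, ψ (∑ i, z i * (y i - y' i)) =
          if y' = y then ((Fintype.card F : ℂ)) ^ d else 0 := by
        intro y'
        by_cases h : y' = y
        · subst h
          simp only [sub_self, mul_zero, Finset.sum_const_zero, AddChar.map_zero_eq_one,
            if_true]
          rw [Finset.sum_const, Finset.card_univ]
          simp [Fintype.card_fun]
        · rw [if_neg h]
          exact aux11_vec d ψ hψ (y - y') (sub_ne_zero_of_ne (Ne.symm h))
      calc ∑ y' ∈ E, ∑ z : Fin d → F, ψ (∑ i, z i * (y i - y' i))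
          = ∑ y' ∈ E, if y' = y then ((Fintype.card F : ℂ)) ^ d else 0 :=
            Finset.sum_congr rfl fun y' _ => inner y'
        _ = ((Fintype.card F : ℂ)) ^ d := by
            rw [Finset.sum_ite_eq' E y (fun _ => ((Fintype.card F : ℂ)) ^ d), if_pos hy]
    calc ∑ y ∈ E, ∑ z : Fin d → F, ∑ y' ∈ E, ψ (∑ i, z i * (y i - y' i))
        = ∑ y ∈ E, ((Fintype.card F : ℂ)) ^ d := Finset.sum_congr rfl swap
      _ = ((Fintype.card F : ℂ)) ^ d * E.card := by
          rw [Finset.sum_const]; ring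
  have cast1 : ∀ z : Fin d → F, ((∑ y ∈ E, ψ (∑ i, z i * y i)) *
      (starRingEnd ℂ) (∑ y ∈ E, ψ (∑ i, z i * y i))) =
      ((Complex.normSq (∑ y ∈ E, ψ (∑ i, z i * y i)) : ℝ) : ℂ) :=
    fun z => Complex.mul_conj _
  rw [funext cast1] at key
  rw [← Complex.ofReal_sum] at key
  exact_mod_cast key

private lemma aux11_qN (d : ℕ) (ψ : AddChar F ℂ) (hψ : ψ.IsPrimitive)
    (E : Finset (Fin d → F)) :
    ∑ s : F, Complex.normSq (∑ p ∈ E ×ˢ E, ψ (s * ∑ i, p.1 i * p.2 i)) =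
      (Fintype.card F : ℝ) *
        ∑ t : F, ((((E ×ˢ E).filter fun p => (∑ i, p.1 i * p.2 i) = t).card : ℝ)) ^ 2 := by
  set dot : (Fin d → F) × (Fin d → F) → F := fun p => ∑ i, p.1 i * p.2 i with hdot
  have key : ∑ s : F, ((∑ p ∈ E ×ˢ E, ψ (s * dot p)) *
      (starRingEnd ℂ) (∑ p ∈ E ×ˢ E, ψ (s * dot p))) =
      (Fintype.card F : ℂ) *
        ∑ t : F, ((((E ×ˢ E).filter fun p => dot p = t).card : ℂ)) ^ 2 := by
    have expand : ∀ s : F, ((∑ p ∈ E ×ˢ E, ψ (s * dot p)) *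
        (starRingEnd ℂ) (∑ p ∈ E ×ˢ E, ψ (s * dot p))) =
        ∑ p ∈ E ×ˢ E, ∑ p' ∈ E ×ˢ E, ψ (s * (dot p - dot p')) := by
      intro s
      rw [map_sum, Finset.sum_mul_sum]
      refine Finset.sum_congr rfl fun p _ => Finset.sum_congr rfl fun p' _ => ?_
      rw [aux11_conj, ← AddChar.map_add_eq_mul]
      congr 1
      ring
    rw [funext expand, Finset.sum_comm]
    have inner1 : ∀ p ∈ E ×ˢ E, ∑ s : F, ∑ p' ∈ E ×ˢ E, ψ (s * (dot p - dot p')) =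
        (Fintype.card F : ℂ) * (((E ×ˢ E).filter fun p' => dot p' = dot p).card : ℂ) := by
      intro p _
      rw [Finset.sum_comm]
      have step : ∀ p' ∈ E ×ˢ E, ∑ s : F, ψ (s * (dot p - dot p')) =
          if dot p' = dot p then (Fintype.card F : ℂ) else 0 := by
        intro p' _
        rw [aux11_sum ψ hψ]
        have hcond : (dot p - dot p' = 0) = (dot p' = dot p) := by
          apply propext
          rw [sub_eq_zero]
          exact ⟨Eq.symm, Eq.symm⟩
        simp only [hcond]
      calc ∑ p' ∈ E ×ˢ E, ∑ s : F, ψ (s * (dot p - dot p'))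
          = ∑ p' ∈ E ×ˢ E, if dot p' = dot p then (Fintype.card F : ℂ) else 0 :=
            Finset.sum_congr rfl step
        _ = (((E ×ˢ E).filter fun p' => dot p' = dot p).card : ℂ) * (Fintype.card F : ℂ) := by
            rw [Finset.sum_ite, Finset.sum_const, Finset.sum_const_zero, add_zero,
              nsmul_eq_mul]
        _ = (Fintype.card F : ℂ) * (((E ×ˢ E).filter fun p' => dot p' = dot p).card : ℂ) := by
            ring
    set νC : F → ℂ := fun t => (((E ×ˢ E).filter fun p' => dot p' = t).card : ℂ) with hνC
    calc ∑ p ∈ E ×ˢ E, ∑ s : F, ∑ p' ∈ E ×ˢ E, ψ (s * (dot p - dot p'))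
        = ∑ p ∈ E ×ˢ E, (Fintype.card F : ℂ) * νC (dot p) :=
          Finset.sum_congr rfl inner1
      _ = (Fintype.card F : ℂ) * ∑ p ∈ E ×ˢ E, νC (dot p) := by
          rw [Finset.mul_sum]
      _ = (Fintype.card F : ℂ) * ∑ t ∈ (E ×ˢ E).image dot,
            ((E ×ˢ E).filter fun p => dot p = t).card • νC t := by
          rw [Finset.sum_comp]
      _ = (Fintype.card F : ℂ) * ∑ t ∈ (E ×ˢ E).image dot, νC t ^ 2 := by
          congr 1
          refine Finset.sum_congr rfl fun t _ => ?_
          rw [nsmul_eq_mul, sq, hνC]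
      _ = (Fintype.card F : ℂ) * ∑ t : F, νC t ^ 2 := by
          congr 1
          refine Finset.sum_subset (Finset.subset_univ _) fun t _ ht => ?_
          have hzero : ((E ×ˢ E).filter fun p' => dot p' = t) = ∅ := by
            exact Finset.filter_eq_empty_iff.mpr
              fun x hx hdx => ht (Finset.mem_image.mpr ⟨x, hx, hdx⟩)
          rw [hνC]
          simp [hzero]
  have cast1 : ∀ s : F, ((∑ p ∈ E ×ˢ E, ψ (s * dot p)) *
      (starRingEnd ℂ) (∑ p ∈ E ×ˢ E, ψ (s * dot p))) =
      ((Complex.normSq (∑ p ∈ E ×ˢ E, ψ (s * dot p)) : ℝ) : ℂ) :=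
    fun s => Complex.mul_conj _
  rw [funext cast1, ← Complex.ofReal_sum] at key
  exact_mod_cast key

private lemma aux11_final (qr e K Nr B : ℝ) (hq : 0 < qr) (hK : 0 ≤ K)
    (hB : 0 < B) (he : 0 ≤ e) (hCS : (e ^ 2) ^ 2 ≤ K * Nr)
    (hqN : qr * Nr ≤ (e ^ 2) ^ 2 + B * e ^ 2) :
    qr * e ^ 2 / (B + e ^ 2) ≤ K := by
  have hden : 0 < B + e ^ 2 := by positivity
  rw [div_le_iff₀ hden]
  rcases eq_or_lt_of_le he with he0 | hepos
  · rw [← he0]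
    norm_num
    positivity
  · have he2 : 0 < e ^ 2 := by positivity
    have h1 : qr * (e ^ 2) ^ 2 ≤ qr * (K * Nr) := by nlinarith
    have h2 : K * (qr * Nr) ≤ K * ((e ^ 2) ^ 2 + B * e ^ 2) := by nlinarith
    have h3 : qr * e ^ 2 * e ^ 2 ≤ K * (B + e ^ 2) * e ^ 2 := by nlinarith
    exact le_of_mul_le_mul_right h3 he2

end auxstmt11

/-- If `0 ∉ E ⊆ F_q^d` and every line through the origin meets `E` in at most
`C_geom · q^(α/d)` points, then
`|{x·y : x,y ∈ E}| ≥ q · |E|² / (C_geom · q^(d+α/d) + |E|²)`. -/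
theorem stmt_11 {F : Type*} [Field F] [Fintype F] (d : ℕ) (hd : 0 < d)
    (Cgeom α : ℝ) (hCgeom : 0 < Cgeom) (hα0 : 0 ≤ α) (hαd : α ≤ d)
    (E : Finset (Fin d → F)) (h0 : (0 : Fin d → F) ∉ E)
    (hline : ∀ y : Fin d → F, y ≠ 0 →
      (Set.ncard ((E : Set (Fin d → F)) ∩ {x | ∃ t : F, x = t • y}) : ℝ) ≤
        Cgeom * (Fintype.card F : ℝ) ^ (α / d)) :
    (Set.ncard {t : F | ∃ x ∈ E, ∃ y ∈ E, t = ∑ i, x i * y i} : ℝ) ≥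
      (Fintype.card F : ℝ) * (E.card : ℝ) ^ 2 /
        (Cgeom * (Fintype.card F : ℝ) ^ ((d : ℝ) + α / d) + (E.card : ℝ) ^ 2) := by
  classical
  set q : ℕ := Fintype.card F with hq
  have hqpos : (0 : ℝ) < q := by exact_mod_cast Fintype.card_pos
  obtain ⟨ψ, hψ⟩ : ∃ ψ : AddChar F ℂ, ψ.IsPrimitive :=
    ⟨_, AddChar.FiniteField.primitiveChar_to_Complex_isPrimitive F⟩
  set dot : (Fin d → F) × (Fin d → F) → F := fun p => ∑ i, p.1 i * p.2 i with hdot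
  set ν : F → ℕ := fun t => ((E ×ˢ E).filter fun p => dot p = t).card with hν
  set D : Finset F := (E ×ˢ E).image dot with hD
  set Sc : (Fin d → F) → ℂ := fun z => ∑ y ∈ E, ψ (∑ i, z i * y i) with hSc
  set M : F → ℂ := fun s => ∑ p ∈ E ×ˢ E, ψ (s * dot p) with hM
  set e : ℝ := (E.card : ℝ) with he
  set Nr : ℝ := ∑ t : F, (ν t : ℝ) ^ 2 with hNr
  -- identify the dot-product set with ↑D
  have hsetD : {t : F | ∃ x ∈ E, ∃ y ∈ E, t = ∑ i, x i * y i} = (D : Set F) := by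
    ext t
    simp only [Set.mem_setOf_eq, hD, Finset.coe_image, Set.mem_image, Finset.mem_coe,
      Finset.mem_product, hdot]
    constructor
    · rintro ⟨x, hx, y, hy, rfl⟩
      exact ⟨(x, y), ⟨hx, hy⟩, rfl⟩
    · rintro ⟨⟨x, y⟩, ⟨hx, hy⟩, rfl⟩
      exact ⟨x, hx, y, hy, rfl⟩
  rw [hsetD, Set.ncard_coe_finset]
  -- first Cauchy–Schwarz: e⁴ ≤ |D| · Nr
  have he2 : ∑ t ∈ D, (ν t : ℝ) = e ^ 2 := by
    have hcard : (E ×ˢ E).card = ∑ t ∈ D, ν t :=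
      Finset.card_eq_sum_card_fiberwise fun p hp => Finset.mem_image_of_mem _ hp
    have : ((E ×ˢ E).card : ℝ) = ∑ t ∈ D, (ν t : ℝ) := by exact_mod_cast hcard
    rw [← this, Finset.card_product, he]
    push_cast
    ring
  have hCS : (e ^ 2) ^ 2 ≤ (D.card : ℝ) * Nr := by
    have h1 : (∑ t ∈ D, (ν t : ℝ)) ^ 2 ≤ (D.card : ℝ) * ∑ t ∈ D, (ν t : ℝ) ^ 2 :=
      sq_sum_le_card_mul_sum_sq
    have h2 : ∑ t ∈ D, (ν t : ℝ) ^ 2 ≤ Nr := by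
      refine Finset.sum_le_sum_of_subset_of_nonneg (Finset.subset_univ D)
        fun t _ _ => by positivity
    calc (e ^ 2) ^ 2 = (∑ t ∈ D, (ν t : ℝ)) ^ 2 := by rw [he2]
      _ ≤ (D.card : ℝ) * ∑ t ∈ D, (ν t : ℝ) ^ 2 := h1
      _ ≤ (D.card : ℝ) * Nr := by
          have : (0:ℝ) ≤ (D.card : ℝ) := by positivity
          nlinarith [h2]
  -- main Fourier bound : q · Nr ≤ e⁴ + Cgeom q^{α/d} q^d e²
  have hA : ∑ s : F, Complex.normSq (M s) = (q : ℝ) * Nr := by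
    simpa [hM, hν, hdot, hNr] using aux11_qN d ψ hψ E
  have hM0 : Complex.normSq (M 0) = (e ^ 2) ^ 2 := by
    have : M 0 = ((e ^ 2 : ℝ) : ℂ) := by
      rw [hM]
      simp only [zero_mul, AddChar.map_zero_eq_one, Finset.sum_const, Finset.card_product,
        nsmul_eq_mul, mul_one]
      rw [he]
      push_cast
      ring
    rw [this, Complex.normSq_ofReal]
    ring
  have hMsum : ∀ s : F, M s = ∑ x ∈ E, Sc (s • x) := by
    intro s
    show ∑ p ∈ E ×ˢ E, ψ (s * dot p) = ∑ x ∈ E, Sc (s • x)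
    rw [Finset.sum_product]
    refine Finset.sum_congr rfl fun x _ => ?_
    rw [hSc]
    refine Finset.sum_congr rfl fun y _ => ?_
    congr 1
    rw [hdot, Finset.mul_sum]
    exact Finset.sum_congr rfl fun i _ => by
      simp [Pi.smul_apply, smul_eq_mul, mul_assoc]
  have hBs : ∀ s : F, Complex.normSq (M s) ≤ e * ∑ x ∈ E, Complex.normSq (Sc (s • x)) := by
    intro s
    have habs : ‖M s‖ ≤ ∑ x ∈ E, ‖Sc (s • x)‖ := by
      rw [hMsum s]
      exact norm_sum_le _ _
    have hsq : (∑ x ∈ E, ‖Sc (s • x)‖) ^ 2 ≤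
        (E.card : ℝ) * ∑ x ∈ E, ‖Sc (s • x)‖ ^ 2 :=
      sq_sum_le_card_mul_sum_sq
    have h1 : Complex.normSq (M s) = ‖M s‖ ^ 2 := Complex.normSq_eq_norm_sq _
    have h2 : ∀ x, ‖Sc (s • x)‖ ^ 2 = Complex.normSq (Sc (s • x)) :=
      fun x => Complex.sq_norm _
    rw [h1]
    calc ‖M s‖ ^ 2 ≤ (∑ x ∈ E, ‖Sc (s • x)‖) ^ 2 := by
          have := norm_nonneg (M s)
          nlinarith [habs, Finset.sum_nonneg (fun x (_ : x ∈ E) => norm_nonneg (Sc (s • x)))]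
      _ ≤ (E.card : ℝ) * ∑ x ∈ E, ‖Sc (s • x)‖ ^ 2 := hsq
      _ = e * ∑ x ∈ E, Complex.normSq (Sc (s • x)) := by
          rw [he]
          congr 1
          exact Finset.sum_congr rfl fun x _ => h2 x
  -- the weighted sum over nonzero dilates
  have hErase : ∑ s ∈ Finset.univ.erase (0 : F), ∑ x ∈ E, Complex.normSq (Sc (s • x)) ≤
      Cgeom * (q : ℝ) ^ (α / (d : ℝ)) * ((q : ℝ) ^ d * e) := by
    have hParse : ∑ z : Fin d → F, Complex.normSq (Sc z) = (q : ℝ) ^ d * e := by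
      simpa [hSc, he] using aux11_parseval d ψ hψ E
    set T : Finset (F × (Fin d → F)) := (Finset.univ.erase (0 : F)) ×ˢ E with hT
    have hprod : ∑ s ∈ Finset.univ.erase (0 : F), ∑ x ∈ E, Complex.normSq (Sc (s • x)) =
        ∑ p ∈ T, Complex.normSq (Sc (p.1 • p.2)) := by
      rw [hT, Finset.sum_product]
    have hcomp : ∑ p ∈ T, Complex.normSq (Sc (p.1 • p.2)) =
        ∑ z ∈ T.image (fun p => p.1 • p.2),
          (T.filter fun p => p.1 • p.2 = z).card • Complex.normSq (Sc z) :=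
      Finset.sum_comp (s := T) (fun z => Complex.normSq (Sc z))
        (fun p : F × (Fin d → F) => p.1 • p.2)
    have hfiber : ∀ z ∈ T.image (fun p => p.1 • p.2),
        ((T.filter fun p => p.1 • p.2 = z).card : ℝ) ≤
          Cgeom * (q : ℝ) ^ (α / (d : ℝ)) := by
      intro z hz
      obtain ⟨p0, hp0T, hp0⟩ := Finset.mem_image.mp hz
      have hp0' := Finset.mem_product.mp hp0T
      have hs0 : p0.1 ≠ 0 := (Finset.mem_erase.mp hp0'.1).1
      have hx0 : p0.2 ≠ 0 := fun hc => h0 (hc ▸ hp0'.2)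
      have hzne : z ≠ 0 := by
        intro hc
        apply hx0
        have hstep : p0.1⁻¹ • (p0.1 • p0.2) = p0.1⁻¹ • z := by rw [hp0]
        rw [inv_smul_smul₀ hs0, hc, smul_zero] at hstep
        exact hstep
      set A : Finset (Fin d → F) := E.filter (fun x => ∃ t : F, x = t • z) with hA2
      have hinj : (T.filter fun p => p.1 • p.2 = z).card ≤ A.card := by
        refine Finset.card_le_card_of_injOn (fun p => p.2) ?_ ?_
        · intro p hp
          obtain ⟨hpT, hpz⟩ := Finset.mem_filter.mp hp
          have hp' := Finset.mem_product.mp hpT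
          have hs : p.1 ≠ 0 := (Finset.mem_erase.mp hp'.1).1
          refine Finset.mem_filter.mpr ⟨hp'.2, ⟨p.1⁻¹, ?_⟩⟩
          rw [← hpz, inv_smul_smul₀ hs]
        · intro p hp p' hp' hpp
          have hpp2 : p.2 = p'.2 := hpp
          simp only [Finset.coe_filter, Set.mem_setOf_eq] at hp hp'
          obtain ⟨hpT, hpz⟩ := hp
          obtain ⟨hpT', hpz'⟩ := hp'
          have hxE : p.2 ∈ E := (Finset.mem_product.mp hpT).2
          have hx : p.2 ≠ 0 := fun hc => h0 (hc ▸ hxE)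
          obtain ⟨i, hi⟩ := Function.ne_iff.mp hx
          have hmul : p.1 * p.2 i = p'.1 * p'.2 i := by
            have h1 : (p.1 • p.2) i = z i := congrFun hpz i
            have h2 : (p'.1 • p'.2) i = z i := congrFun hpz' i
            simp only [Pi.smul_apply, smul_eq_mul] at h1 h2
            rw [h1, h2]
          have hp1 : p.1 = p'.1 := by
            rw [← hpp2] at hmul
            exact mul_right_cancel₀ (by simpa using hi) hmul
          exact Prod.ext hp1 hpp2
      have hAcard : (A.card : ℝ) =
          (Set.ncard ((E : Set (Fin d → F)) ∩ {x | ∃ t : F, x = t • z}) : ℝ) := by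
        have hco : ((E : Set (Fin d → F)) ∩ {x | ∃ t : F, x = t • z}) =
            (A : Set (Fin d → F)) := by
          ext x
          simp [hA2]
        rw [hco, Set.ncard_coe_finset]
      calc ((T.filter fun p => p.1 • p.2 = z).card : ℝ) ≤ (A.card : ℝ) := by
            exact_mod_cast hinj
        _ = _ := hAcard
        _ ≤ Cgeom * (q : ℝ) ^ (α / (d : ℝ)) := hline z hzne
    have hCq : 0 ≤ Cgeom * (q : ℝ) ^ (α / (d : ℝ)) :=
      mul_nonneg hCgeom.le (Real.rpow_nonneg hqpos.le _)
    have hbound : ∑ z ∈ T.image (fun p => p.1 • p.2),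
        ((T.filter fun p => p.1 • p.2 = z).card • Complex.normSq (Sc z)) ≤
        Cgeom * (q : ℝ) ^ (α / (d : ℝ)) *
          ∑ z ∈ T.image (fun p => p.1 • p.2), Complex.normSq (Sc z) := by
      rw [Finset.mul_sum]
      refine Finset.sum_le_sum fun z hz => ?_
      rw [nsmul_eq_mul]
      exact mul_le_mul_of_nonneg_right (hfiber z hz) (Complex.normSq_nonneg _)
    have hext : ∑ z ∈ T.image (fun p => p.1 • p.2), Complex.normSq (Sc z) ≤
        ∑ z : Fin d → F, Complex.normSq (Sc z) :=
      Finset.sum_le_sum_of_subset_of_nonneg (Finset.subset_univ _)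
        (fun z _ _ => Complex.normSq_nonneg _)
    calc ∑ s ∈ Finset.univ.erase (0 : F), ∑ x ∈ E, Complex.normSq (Sc (s • x))
        = ∑ z ∈ T.image (fun p => p.1 • p.2),
          (T.filter fun p => p.1 • p.2 = z).card • Complex.normSq (Sc z) := by
          rw [hprod, hcomp]
      _ ≤ Cgeom * (q : ℝ) ^ (α / (d : ℝ)) *
            ∑ z ∈ T.image (fun p => p.1 • p.2), Complex.normSq (Sc z) := hbound
      _ ≤ Cgeom * (q : ℝ) ^ (α / (d : ℝ)) * ∑ z : Fin d → F, Complex.normSq (Sc z) :=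
          mul_le_mul_of_nonneg_left hext hCq
      _ = Cgeom * (q : ℝ) ^ (α / (d : ℝ)) * ((q : ℝ) ^ d * e) := by rw [hParse]
  -- Parseval is used inside hErase
  -- combine
  have hqN : (q : ℝ) * Nr ≤ (e ^ 2) ^ 2 + e * (Cgeom * (q : ℝ) ^ (α / (d : ℝ)) * ((q : ℝ) ^ d * e)) := by
    have hsplit : ∑ s : F, Complex.normSq (M s) =
        Complex.normSq (M 0) + ∑ s ∈ Finset.univ.erase (0 : F), Complex.normSq (M s) :=
      (Finset.add_sum_erase Finset.univ _ (Finset.mem_univ 0)).symm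
    have hrest : ∑ s ∈ Finset.univ.erase (0 : F), Complex.normSq (M s) ≤
        e * ∑ s ∈ Finset.univ.erase (0 : F), ∑ x ∈ E, Complex.normSq (Sc (s • x)) := by
      rw [Finset.mul_sum]
      exact Finset.sum_le_sum fun s _ => hBs s
    have he0 : 0 ≤ e := by rw [he]; positivity
    calc (q : ℝ) * Nr = ∑ s : F, Complex.normSq (M s) := hA.symm
      _ = Complex.normSq (M 0) + ∑ s ∈ Finset.univ.erase (0 : F), Complex.normSq (M s) := hsplit
      _ ≤ (e ^ 2) ^ 2 + e * ∑ s ∈ Finset.univ.erase (0 : F), ∑ x ∈ E,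
            Complex.normSq (Sc (s • x)) := by
          rw [hM0]; linarith [hrest]
      _ ≤ (e ^ 2) ^ 2 + e * (Cgeom * (q : ℝ) ^ (α / (d : ℝ)) * ((q : ℝ) ^ d * e)) := by
          have := mul_le_mul_of_nonneg_left hErase he0
          linarith
  -- final algebra
  have hrpow : (q : ℝ) ^ ((d : ℝ) + α / d) = (q : ℝ) ^ d * (q : ℝ) ^ (α / (d : ℝ)) := by
    rw [Real.rpow_add hqpos, Real.rpow_natCast]
  rw [ge_iff_le, hrpow]
  have hqN' : (q : ℝ) * Nr ≤ (e ^ 2) ^ 2 +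
      Cgeom * ((q : ℝ) ^ d * (q : ℝ) ^ (α / (d : ℝ))) * e ^ 2 := by
    have hring : e * (Cgeom * (q : ℝ) ^ (α / (d : ℝ)) * ((q : ℝ) ^ d * e)) =
        Cgeom * ((q : ℝ) ^ d * (q : ℝ) ^ (α / (d : ℝ))) * e ^ 2 := by ring
    linarith [hqN, hring.le, hring.ge]
  have hBpos : 0 < Cgeom * ((q : ℝ) ^ d * (q : ℝ) ^ (α / (d : ℝ))) :=
    mul_pos hCgeom (mul_pos (by positivity) (Real.rpow_pos_of_pos hqpos _))
  have he0 : 0 ≤ e := by rw [he]; positivity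
  have hK0 : (0:ℝ) ≤ (D.card : ℝ) := by positivity
  exact aux11_final (q : ℝ) e (D.card : ℝ) Nr _ hqpos hK0 hBpos he0 hCS hqN'
end

section
/- Let q be a prime power, F_q the finite field with q elements, d a positive integer, and let C_geom > 0 and 0 ≤ α ≤ d be real numbers. Let E ⊆ F_q^d with 0 ∉ E be such that |E ∩ l_y| ≤ C_geom · q^(α/d) for every y ∈ F_q^d with y ≠ 0, where l_y = {t·y : t ∈ F_q}. For t ∈ F_q set ν(t) = |{(x,y) ∈ E × E : x·y = t}|. Then ∑_{t ∈ F_q} ν(t)² ≤ C_geom · |E|² · q^(d - 1 + α/d) + |E|⁴ / q. -/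
open Finset

section aux

variable {F : Type*} [Field F] [Fintype F] [DecidableEq F] {d : ℕ}

private lemma aux_dot_single (v : Fin d → F) (i : Fin d) (a : F) :
    ∑ j, v j * (Pi.single i a : Fin d → F) j = v i * a := by
  rw [Finset.sum_eq_single i]
  · simp
  · intro j _ hj
    simp [Pi.single_eq_of_ne hj]
  · simp

private lemma aux_card_fiber (v : Fin d → F) (hv : v ≠ 0) (t : F) :
    (univ.filter fun z : Fin d → F => ∑ i, v i * z i = t).card
      = (univ.filter fun z : Fin d → F => ∑ i, v i * z i = 0).card := by
  obtain ⟨i, hi⟩ : ∃ i, v i ≠ 0 := by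
    by_contra h
    push_neg at h
    exact hv (funext h)
  set w : Fin d → F := Pi.single i ((v i)⁻¹ * t) with hw
  have hdw : ∑ j, v j * w j = t := by
    rw [hw, aux_dot_single]
    field_simp
  apply Finset.card_nbij' (fun z => z - w) (fun z => z + w)
  · intro z hz
    simp only [mem_coe, mem_filter, mem_univ, true_and] at hz ⊢
    have h1 : ∑ j, v j * (z - w) j = (∑ j, v j * z j) - ∑ j, v j * w j := by
      rw [← Finset.sum_sub_distrib]
      exact Finset.sum_congr rfl fun j _ => by simp [mul_sub]
    rw [h1, hz, hdw, sub_self]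
  · intro z hz
    simp only [mem_coe, mem_filter, mem_univ, true_and] at hz ⊢
    have h1 : ∑ j, v j * (z + w) j = (∑ j, v j * z j) + ∑ j, v j * w j := by
      rw [← Finset.sum_add_distrib]
      exact Finset.sum_congr rfl fun j _ => by simp [mul_add]
    rw [h1, hz, hdw, zero_add]
  · intro z _
    simp
  · intro z _
    simp

private lemma aux_card_zero' (n : ℕ) (v : Fin (n + 1) → F) (hv : v ≠ 0) :
    (univ.filter fun z : Fin (n + 1) → F => ∑ i, v i * z i = 0).card
      = Fintype.card F ^ n := by
  have h1 : (univ : Finset (Fin (n + 1) → F)).card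
      = ∑ t : F, (univ.filter fun z : Fin (n + 1) → F => ∑ i, v i * z i = t).card :=
    Finset.card_eq_sum_card_fiberwise fun x _ => mem_univ _
  rw [Finset.sum_congr rfl fun t _ => aux_card_fiber v hv t, Finset.sum_const,
    smul_eq_mul, card_univ, card_univ] at h1
  have h2 : Fintype.card (Fin (n + 1) → F) = Fintype.card F ^ (n + 1) := by
    simp [Fintype.card_fun]
  refine Nat.eq_of_mul_eq_mul_left (Fintype.card_pos (α := F)) ?_
  rw [← h1, h2, pow_succ, mul_comm]

private lemma aux_card_zero (hd : 0 < d) (v : Fin d → F) (hv : v ≠ 0) :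
    (univ.filter fun z : Fin d → F => ∑ i, v i * z i = 0).card
      = Fintype.card F ^ (d - 1) := by
  obtain ⟨n, rfl⟩ : ∃ n, d = n + 1 := ⟨d - 1, by omega⟩
  rw [Nat.add_sub_cancel]
  exact aux_card_zero' n v hv

private lemma aux_card_dot (hd : 0 < d) (x x' : Fin d → F) :
    ((univ.filter fun z : Fin d → F => ∑ i, x i * z i = ∑ i, x' i * z i).card : ℝ)
      = if x = x' then ((Fintype.card F : ℝ)) ^ d else ((Fintype.card F : ℝ)) ^ (d - 1) := by
  by_cases hxx : x = x'
  · subst hxx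
    rw [if_pos rfl]
    have : (univ.filter fun z : Fin d → F => ∑ i, x i * z i = ∑ i, x i * z i) = univ :=
      Finset.filter_true_of_mem fun z _ => rfl
    rw [this, card_univ]
    simp [Fintype.card_fun]
  · rw [if_neg hxx]
    have hv : x - x' ≠ 0 := sub_ne_zero.mpr hxx
    have hfe : (univ.filter fun z : Fin d → F => ∑ i, x i * z i = ∑ i, x' i * z i)
        = (univ.filter fun z : Fin d → F => ∑ i, (x - x') i * z i = 0) := by
      apply Finset.filter_congr
      intro z _
      constructor
      · intro h
        have : ∑ i, (x - x') i * z i = (∑ i, x i * z i) - ∑ i, x' i * z i := by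
          rw [← Finset.sum_sub_distrib]
          exact Finset.sum_congr rfl fun j _ => by simp [sub_mul]
        rw [this, h, sub_self]
      · intro h
        have : ∑ i, (x - x') i * z i = (∑ i, x i * z i) - ∑ i, x' i * z i := by
          rw [← Finset.sum_sub_distrib]
          exact Finset.sum_congr rfl fun j _ => by simp [sub_mul]
        rw [this] at h
        exact sub_eq_zero.mp h
    rw [hfe, aux_card_zero hd _ hv]
    push_cast
    ring

end aux



open Finset in
/-- If `0 ∉ E ⊆ F_q^d` and every line through the origin meets `E` in at most
`C_geom · q^(α/d)` points, then
`∑_t ν(t)² ≤ C_geom · |E|² · q^(d-1+α/d) + |E|⁴/q`. -/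
theorem stmt_12 {F : Type*} [Field F] [Fintype F] [DecidableEq F] (d : ℕ) (hd : 0 < d)
    (Cgeom α : ℝ) (hCgeom : 0 < Cgeom) (hα0 : 0 ≤ α) (hαd : α ≤ d)
    (E : Finset (Fin d → F)) (h0 : (0 : Fin d → F) ∉ E)
    (hline : ∀ y : Fin d → F, y ≠ 0 →
      (Set.ncard ((E : Set (Fin d → F)) ∩ {x | ∃ t : F, x = t • y}) : ℝ) ≤
        Cgeom * (Fintype.card F : ℝ) ^ (α / d)) :
    ∑ t : F, (((E ×ˢ E).filter (fun p => ∑ i, p.1 i * p.2 i = t)).card : ℝ) ^ 2 ≤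
      Cgeom * (E.card : ℝ) ^ 2 * (Fintype.card F : ℝ) ^ ((d : ℝ) - 1 + α / d) +
        (E.card : ℝ) ^ 4 / (Fintype.card F : ℝ) := by
  classical
  have hq1 : 1 < Fintype.card F := Fintype.one_lt_card
  set q : ℝ := (Fintype.card F : ℝ) with hq
  have hq1' : (1 : ℝ) < q := by rw [hq]; exact_mod_cast hq1
  have hq0 : (0 : ℝ) < q := lt_trans one_pos hq1'
  set e : ℝ := (E.card : ℝ) with he
  have he0 : (0 : ℝ) ≤ e := Nat.cast_nonneg _
  set m : (Fin d → F) → F → ℝ :=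
    fun y u => ∑ x ∈ E, if ∑ i, x i * y i = u then (1 : ℝ) else 0 with hm
  -- ν t as a sum over directions
  have hν : ∀ t : F,
      (((E ×ˢ E).filter (fun p => ∑ i, p.1 i * p.2 i = t)).card : ℝ) = ∑ y ∈ E, m y t := by
    intro t
    rw [← Finset.sum_boole, Finset.sum_product, Finset.sum_comm]
  -- row sums
  have hrow : ∀ y : Fin d → F, ∑ u : F, m y u = e := by
    intro y
    rw [hm]
    rw [Finset.sum_comm]
    have h1 : ∀ x ∈ E, ∑ u : F, (if ∑ i, x i * y i = u then (1 : ℝ) else 0) = 1 := by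
      intro x _
      rw [Finset.sum_ite_eq univ (∑ i, x i * y i) (fun _ => (1 : ℝ))]
      simp
    rw [Finset.sum_congr rfl h1, Finset.sum_const, nsmul_eq_mul, mul_one]
  set P : (Fin d → F) → ℝ := fun y => ∑ u : F, (m y u) ^ 2 with hP
  -- indicator product
  have hkey : ∀ a b : F,
      ∑ u : F, (if a = u then (1 : ℝ) else 0) * (if b = u then (1 : ℝ) else 0)
        = if a = b then 1 else 0 := by
    intro a b
    by_cases hab : a = b
    · subst hab
      rw [if_pos rfl]
      have h1 : ∀ u : F, (if a = u then (1 : ℝ) else 0) * (if a = u then (1 : ℝ) else 0)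
          = if a = u then (1 : ℝ) else 0 := by
        intro u; split_ifs <;> norm_num
      rw [Finset.sum_congr rfl fun u _ => h1 u,
        Finset.sum_ite_eq univ a (fun _ => (1 : ℝ))]
      simp
    · rw [if_neg hab]
      apply Finset.sum_eq_zero
      intro u _
      split_ifs with h1 h2 h3 <;> first | exact absurd (h1.trans h2.symm) hab | ring
  -- P as pair count
  have hPcount : ∀ y : Fin d → F, P y =
      ∑ x ∈ E, ∑ x' ∈ E, (if ∑ i, x i * y i = ∑ i, x' i * y i then (1 : ℝ) else 0) := by
    intro y
    rw [hP]
    simp only [pow_two, hm]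
    calc ∑ u : F, (∑ x ∈ E, if ∑ i, x i * y i = u then (1:ℝ) else 0) *
            (∑ x' ∈ E, if ∑ i, x' i * y i = u then (1:ℝ) else 0)
        = ∑ u : F, ∑ x ∈ E, ∑ x' ∈ E,
            (if ∑ i, x i * y i = u then (1:ℝ) else 0) *
            (if ∑ i, x' i * y i = u then (1:ℝ) else 0) := by
          exact Finset.sum_congr rfl fun u _ => Finset.sum_mul_sum E E _ _
      _ = ∑ x ∈ E, ∑ x' ∈ E, ∑ u : F,
            (if ∑ i, x i * y i = u then (1:ℝ) else 0) *
            (if ∑ i, x' i * y i = u then (1:ℝ) else 0) := by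
          rw [Finset.sum_comm]
          exact Finset.sum_congr rfl fun x _ => Finset.sum_comm
      _ = ∑ x ∈ E, ∑ x' ∈ E,
            (if ∑ i, x i * y i = ∑ i, x' i * y i then (1:ℝ) else 0) :=
          Finset.sum_congr rfl fun x _ => Finset.sum_congr rfl fun x' _ => hkey _ _
  -- total sum of P
  have hPsum : ∑ z : Fin d → F, P z = e * q ^ d + (e ^ 2 - e) * q ^ (d - 1) := by
    have h1 : ∑ z : Fin d → F, P z
        = ∑ x ∈ E, ∑ x' ∈ E, ∑ z : Fin d → F,
            (if ∑ i, x i * z i = ∑ i, x' i * z i then (1:ℝ) else 0) := by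
      rw [Finset.sum_congr rfl fun z _ => hPcount z, Finset.sum_comm]
      exact Finset.sum_congr rfl fun x _ => Finset.sum_comm
    have h2 : ∀ x x' : Fin d → F, (∑ z : Fin d → F,
        (if ∑ i, x i * z i = ∑ i, x' i * z i then (1:ℝ) else 0))
          = if x = x' then q ^ d else q ^ (d-1) := by
      intro x x'
      rw [Finset.sum_boole]
      exact aux_card_dot hd x x'
    rw [h1, Finset.sum_congr rfl fun x _ => Finset.sum_congr rfl fun x' _ => h2 x x']
    have h3 : ∀ x ∈ E, (∑ x' ∈ E, (if x = x' then (q^d : ℝ) else q^(d-1)))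
        = e * q^(d-1) + (q^d - q^(d-1)) := by
      intro x hx
      have h4 : ∀ x' : Fin d → F, (if x = x' then (q^d : ℝ) else q^(d-1))
          = q^(d-1) + (if x = x' then q^d - q^(d-1) else 0) := by
        intro x'; split_ifs <;> ring
      rw [Finset.sum_congr rfl fun x' _ => h4 x', Finset.sum_add_distrib,
        Finset.sum_const, Finset.sum_ite_eq E x (fun _ => (q^d - q^(d-1) : ℝ)), if_pos hx,
        nsmul_eq_mul]
    rw [Finset.sum_congr rfl h3, Finset.sum_const, nsmul_eq_mul, ← he]
    ring
  -- scaling invariance of P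
  have hPinv : ∀ s : F, s ≠ 0 → ∀ y : Fin d → F, P (s • y) = P y := by
    intro s hs y
    have hmi : ∀ u : F, m (s • y) u = m y (s⁻¹ * u) := by
      intro u
      rw [hm]
      apply Finset.sum_congr rfl
      intro x _
      have hdot : ∑ i, x i * (s • y) i = s * ∑ i, x i * y i := by
        rw [Finset.mul_sum]
        exact Finset.sum_congr rfl fun i _ => by
          simp only [Pi.smul_apply, smul_eq_mul]; ring
      have hiff : (∑ i, x i * (s • y) i = u) ↔ (∑ i, x i * y i = s⁻¹ * u) := by
        rw [hdot]
        constructor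
        · intro h; rw [← h]; field_simp
        · intro h; rw [h]; field_simp
      simp only [hiff]
    have h1 : P (s • y) = ∑ u : F, (m y (s⁻¹ * u))^2 := by
      rw [hP]; exact Finset.sum_congr rfl fun u _ => by rw [hmi u]
    rw [h1, hP]
    refine Fintype.sum_equiv (Equiv.mulLeft₀ s⁻¹ (inv_ne_zero hs)) _ _ ?_
    intro u
    simp [Equiv.mulLeft₀]
  -- Cauchy-Schwarz lower bound on each P
  have hWnn : ∀ z : Fin d → F, e^2 / q ≤ P z := by
    intro z
    have h1 : e^2 ≤ q * P z := by
      have h2 := sq_sum_le_card_mul_sum_sq (s := (univ : Finset F)) (f := m z)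
      rw [hrow z] at h2
      simpa using h2
    rw [div_le_iff₀ hq0, mul_comm]
    exact h1
  have hsum_m : ∑ t : F, ∑ y ∈ E, m y t = e * e := by
    rw [Finset.sum_comm, Finset.sum_congr rfl fun y (_ : y ∈ E) => hrow y,
      Finset.sum_const, nsmul_eq_mul, ← he]
  -- the variance Cauchy-Schwarz step
  have hCS : ∑ t : F, (∑ y ∈ E, m y t)^2 ≤ e^4 / q + e * ∑ y ∈ E, (P y - e^2/q) := by
    set c : ℝ := e / q with hc
    set A : F → ℝ := fun t => (∑ y ∈ E, m y t) - e^2/q with hA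
    have hAt : ∀ t : F, A t = ∑ y ∈ E, (m y t - c) := by
      intro t
      rw [hA]
      rw [Finset.sum_sub_distrib, Finset.sum_const, nsmul_eq_mul, ← he, hc]
      field_simp
    have hA0 : ∑ t : F, A t = 0 := by
      rw [hA]
      simp only
      rw [Finset.sum_sub_distrib, hsum_m, Finset.sum_const, nsmul_eq_mul, Finset.card_univ]
      rw [show ((Fintype.card F : ℝ)) = q from rfl]
      field_simp
      ring
    have hAsq : ∀ t : F, (A t)^2 ≤ e * ∑ y ∈ E, (m y t - c)^2 := by
      intro t
      rw [hAt t, he]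
      exact sq_sum_le_card_mul_sum_sq
    have hinner : ∀ y : Fin d → F, ∑ t : F, (m y t - c)^2 = P y - e^2/q := by
      intro y
      have h1 : ∀ t : F, (m y t - c)^2 = (m y t)^2 - (2*c)*(m y t) + c^2 := fun t => by ring
      rw [Finset.sum_congr rfl fun t _ => h1 t, Finset.sum_add_distrib,
        Finset.sum_sub_distrib, ← Finset.mul_sum, hrow y, Finset.sum_const,
        nsmul_eq_mul, Finset.card_univ]
      rw [show ((Fintype.card F : ℝ)) = q from rfl, show P y = ∑ u : F, (m y u)^2 from rfl, hc]
      field_simp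
      ring
    have hexp : ∀ t : F, (∑ y ∈ E, m y t)^2 = (A t)^2 + (2*(e^2/q))*(A t) + (e^2/q)^2 := by
      intro t
      have : ∑ y ∈ E, m y t = A t + e^2/q := by rw [hA]; ring
      rw [this]; ring
    calc ∑ t : F, (∑ y ∈ E, m y t)^2
        = (∑ t : F, (A t)^2) + ((2*(e^2/q)) * ∑ t : F, A t) + (Fintype.card F : ℝ) * (e^2/q)^2 := by
          rw [Finset.sum_congr rfl fun t _ => hexp t, Finset.sum_add_distrib,
            Finset.sum_add_distrib, ← Finset.mul_sum, Finset.sum_const, nsmul_eq_mul,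
            Finset.card_univ]
      _ = (∑ t : F, (A t)^2) + e^4/q := by
          rw [hA0, show ((Fintype.card F : ℝ)) = q from rfl]
          field_simp
          ring
      _ ≤ (∑ t : F, e * ∑ y ∈ E, (m y t - c)^2) + e^4/q := by
          have := Finset.sum_le_sum (s := (univ : Finset F)) fun t _ => hAsq t
          linarith
      _ = e * ∑ y ∈ E, (P y - e^2/q) + e^4/q := by
          rw [← Finset.mul_sum, Finset.sum_comm]
          rw [Finset.sum_congr rfl fun y (_ : y ∈ E) => hinner y]
      _ = e^4/q + e * ∑ y ∈ E, (P y - e^2/q) := by ring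
  -- the weight W
  set W : (Fin d → F) → ℝ := fun z => P z - e^2/q with hWdef
  have hWnn' : ∀ z : Fin d → F, 0 ≤ W z := fun z => by
    have := hWnn z
    simp only [hWdef]
    linarith
  have hWinv : ∀ s : F, s ≠ 0 → ∀ y : Fin d → F, W (s • y) = W y := by
    intro s hs y
    simp only [hWdef, hPinv s hs y]
  have hcardF : ((Fintype.card (Fin d → F) : ℝ)) = q^d := by
    rw [Fintype.card_fun, Fintype.card_fin]
    push_cast
    rfl
  have hqd : (q : ℝ)^d = q^(d-1) * q := by
    obtain ⟨n, rfl⟩ : ∃ n, d = n + 1 := ⟨d - 1, by omega⟩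
    rw [Nat.add_sub_cancel, pow_succ]
  have hWuniv : ∑ z : Fin d → F, W z = q^(d-1) * e * (q - 1) := by
    simp only [hWdef]
    rw [Finset.sum_sub_distrib, hPsum, Finset.sum_const, nsmul_eq_mul, Finset.card_univ,
      hcardF, hqd]
    field_simp
    ring
  -- fiber bound from the line hypothesis
  have hfiber : ∀ z : Fin d → F, z ≠ 0 →
      ((((E ×ˢ ((univ : Finset F).erase 0)).filter (fun p => p.2 • p.1 = z)).card : ℝ))
        ≤ Cgeom * q ^ (α / d) := by
    intro z hz
    have hsub : ((E ×ˢ ((univ : Finset F).erase 0)).filter (fun p => p.2 • p.1 = z)).card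
        ≤ (E.filter (fun x => ∃ t : F, x = t • z)).card := by
      apply Finset.card_le_card_of_injOn (fun p => p.1)
      · intro p hp
        simp only [Finset.mem_coe, Finset.mem_filter, Finset.mem_product, Finset.mem_erase] at hp
        obtain ⟨⟨hp1, hp2, _⟩, hp3⟩ := hp
        refine Finset.mem_filter.mpr ⟨hp1, ⟨(p.2)⁻¹, ?_⟩⟩
        rw [← hp3, inv_smul_smul₀ hp2]
      · intro p hp p' hp' hpp
        simp only [Finset.coe_filter, Set.mem_setOf_eq, Finset.mem_product,
          Finset.mem_erase] at hp hp'
        obtain ⟨⟨hp1, hp2, _⟩, hp3⟩ := hp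
        obtain ⟨⟨hp1', hp2', _⟩, hp3'⟩ := hp'
        have hy0 : p.1 ≠ 0 := fun h => h0 (h ▸ hp1)
        obtain ⟨i, hi⟩ : ∃ i, p.1 i ≠ 0 := by
          by_contra h
          push_neg at h
          exact hy0 (funext h)
        have hpp' : p.1 = p'.1 := hpp
        have hsm : p.2 • p.1 = p'.2 • p.1 := by
          rw [hp3, hpp', hp3']
        have h5 := congrFun hsm i
        simp only [Pi.smul_apply, smul_eq_mul] at h5
        exact Prod.ext hpp' (mul_right_cancel₀ hi h5)
    have hset : ((E.filter (fun x => ∃ t : F, x = t • z)) : Set (Fin d → F))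
        = (E : Set (Fin d → F)) ∩ {x | ∃ t : F, x = t • z} := by
      ext x
      simp [Finset.mem_filter]
    calc ((((E ×ˢ ((univ : Finset F).erase 0)).filter (fun p => p.2 • p.1 = z)).card : ℝ))
        ≤ ((E.filter (fun x => ∃ t : F, x = t • z)).card : ℝ) := Nat.cast_le.mpr hsub
      _ = (Set.ncard ((E : Set (Fin d → F)) ∩ {x | ∃ t : F, x = t • z}) : ℝ) := by
          rw [← hset, Set.ncard_coe_finset]
      _ ≤ Cgeom * q ^ (α / d) := hline z hz
  -- main reindexing inequality
  have hCq : (0:ℝ) ≤ Cgeom * q ^ (α / d) :=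
    mul_nonneg hCgeom.le (Real.rpow_nonneg hq0.le _)
  have hcaste : ((Fintype.card F - 1 : ℕ) : ℝ) = q - 1 := by
    rw [Nat.cast_sub hq1.le]
    push_cast
    rfl
  have hmain : (q - 1) * ∑ y ∈ E, W y ≤ Cgeom * q^(α/d) * (q^(d-1) * e * (q-1)) := by
    have h1 : ∀ y ∈ E, ∑ s ∈ (univ : Finset F).erase 0, W (s • y) = (q-1) * W y := by
      intro y _
      rw [Finset.sum_congr rfl fun s hs => hWinv s (Finset.mem_erase.mp hs).1 y,
        Finset.sum_const, nsmul_eq_mul, Finset.card_erase_of_mem (Finset.mem_univ _),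
        Finset.card_univ, hcaste]
    have h2 : (q - 1) * ∑ y ∈ E, W y
        = ∑ p ∈ E ×ˢ ((univ : Finset F).erase 0), W (p.2 • p.1) := by
      rw [Finset.sum_product, Finset.sum_congr rfl h1, ← Finset.mul_sum]
    have hmaps : ∀ p ∈ E ×ˢ ((univ : Finset F).erase 0),
        p.2 • p.1 ∈ (univ : Finset (Fin d → F)).filter (fun z => z ≠ 0) := by
      intro p hp
      simp only [Finset.mem_product, Finset.mem_erase] at hp
      refine Finset.mem_filter.mpr ⟨Finset.mem_univ _, ?_⟩
      exact smul_ne_zero hp.2.1 (fun h => h0 (h ▸ hp.1))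
    have h3 : ∑ p ∈ E ×ˢ ((univ : Finset F).erase 0), W (p.2 • p.1)
        = ∑ z ∈ (univ : Finset (Fin d → F)).filter (fun z => z ≠ 0),
            ∑ p ∈ (E ×ˢ ((univ : Finset F).erase 0)).filter (fun p => p.2 • p.1 = z),
              W (p.2 • p.1) :=
      (Finset.sum_fiberwise_of_maps_to hmaps _).symm
    have h4 : ∀ z ∈ (univ : Finset (Fin d → F)).filter (fun z => z ≠ 0),
        (∑ p ∈ (E ×ˢ ((univ : Finset F).erase 0)).filter (fun p => p.2 • p.1 = z),
          W (p.2 • p.1)) ≤ Cgeom * q^(α/d) * W z := by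
      intro z hz
      have hz0 : z ≠ 0 := (Finset.mem_filter.mp hz).2
      have h5 : (∑ p ∈ (E ×ˢ ((univ : Finset F).erase 0)).filter (fun p => p.2 • p.1 = z),
          W (p.2 • p.1))
          = (((E ×ˢ ((univ : Finset F).erase 0)).filter (fun p => p.2 • p.1 = z)).card : ℝ)
            * W z := by
        rw [Finset.sum_congr rfl fun p hp => by rw [(Finset.mem_filter.mp hp).2],
          Finset.sum_const, nsmul_eq_mul]
      rw [h5]
      exact mul_le_mul_of_nonneg_right (hfiber z hz0) (hWnn' z)
    calc (q - 1) * ∑ y ∈ E, W y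
        = ∑ z ∈ (univ : Finset (Fin d → F)).filter (fun z => z ≠ 0),
            ∑ p ∈ (E ×ˢ ((univ : Finset F).erase 0)).filter (fun p => p.2 • p.1 = z),
              W (p.2 • p.1) := by rw [h2, h3]
      _ ≤ ∑ z ∈ (univ : Finset (Fin d → F)).filter (fun z => z ≠ 0),
            Cgeom * q^(α/d) * W z := Finset.sum_le_sum h4
      _ = Cgeom * q^(α/d) * ∑ z ∈ (univ : Finset (Fin d → F)).filter (fun z => z ≠ 0),
            W z := by rw [Finset.mul_sum]
      _ ≤ Cgeom * q^(α/d) * ∑ z : Fin d → F, W z := by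
          refine mul_le_mul_of_nonneg_left ?_ hCq
          exact Finset.sum_le_sum_of_subset_of_nonneg (Finset.filter_subset _ _)
            (fun z _ _ => hWnn' z)
      _ = Cgeom * q^(α/d) * (q^(d-1) * e * (q-1)) := by rw [hWuniv]
  have hq1'' : (0:ℝ) < q - 1 := by linarith
  have hEsum : ∑ y ∈ E, W y ≤ Cgeom * q^(α/d) * (q^(d-1) * e) := by
    have h7 : Cgeom * q^(α/d) * (q^(d-1) * e * (q-1))
        = (q-1) * (Cgeom * q^(α/d) * (q^(d-1) * e)) := by ring
    rw [h7] at hmain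
    exact le_of_mul_le_mul_left hmain hq1''
  -- assemble everything
  have hgoal : ∑ t : F, (((E ×ˢ E).filter (fun p => ∑ i, p.1 i * p.2 i = t)).card : ℝ) ^ 2
      = ∑ t : F, (∑ y ∈ E, m y t)^2 :=
    Finset.sum_congr rfl fun t _ => by rw [hν t]
  rw [hgoal]
  have hfinal : ∑ t : F, (∑ y ∈ E, m y t)^2
      ≤ e^4/q + e * (Cgeom * q^(α/d) * (q^(d-1) * e)) := by
    refine le_trans hCS ?_
    have h8 : ∑ y ∈ E, (P y - e^2/q) = ∑ y ∈ E, W y :=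
      Finset.sum_congr rfl fun y _ => rfl
    rw [h8]
    have := mul_le_mul_of_nonneg_left hEsum he0
    linarith
  refine le_trans hfinal ?_
  have hrpow : q^((d:ℝ) - 1 + α/d) = q^(d-1) * q^(α/d) := by
    rw [Real.rpow_add hq0]
    congr 1
    rw [show ((d:ℝ) - 1) = ((d - 1 : ℕ) : ℝ) by rw [Nat.cast_sub hd]; norm_num]
    exact Real.rpow_natCast q (d-1)
  rw [hrpow]
  apply le_of_eq
  ring
end

section
/- Let q be a prime power, F_q the finite field with q elements, and d a positive integer. Let E, F ⊆ F_q^d and for t ∈ F_q define ν(t) = |{(x,y) ∈ E × F : x·y = t}|. Then for every t ∈ F_q with t ≠ 0, |ν(t) - |E|·|F|/q| ≤ √(|E|·|F|) · q^((d-1)/2). In particular, if |E|·|F| > q^(d+1), then every nonzero t ∈ F_q can be written as t = x·y with x ∈ E, y ∈ F. -/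
open Finset

set_option linter.unusedSectionVars false

section Aux
variable {K : Type*} [Field K] [Fintype K] [DecidableEq K]

private lemma psi_map_sum' {ι : Type*} (ψ : AddChar K ℂ) (s : Finset ι) (f : ι → K) :
    ψ (∑ i ∈ s, f i) = ∏ i ∈ s, ψ (f i) := by
  induction s using Finset.cons_induction with
  | empty => simp
  | cons a s ha ih => rw [Finset.sum_cons, Finset.prod_cons, AddChar.map_add_eq_mul, ih]

private lemma orth' (ψ : AddChar K ℂ) (hψ : ψ ≠ 0) (a : K) :
    ∑ s : K, ψ (s * a) = if a = 0 then (Fintype.card K : ℂ) else 0 := by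
  split_ifs with h
  · simp [h, Finset.card_univ]
  · rw [show (0:ℂ) = ∑ s : K, ψ s from (AddChar.sum_eq_zero_iff_ne_zero.mpr hψ).symm]
    exact Fintype.sum_equiv (Equiv.mulRight₀ a h) _ _ (fun s => rfl)

private lemma orthvec' (d : ℕ) (ψ : AddChar K ℂ) (hψ : ψ ≠ 0) (v : Fin d → K) :
    ∑ x : Fin d → K, ψ (∑ i, x i * v i) = if v = 0 then ((Fintype.card K : ℂ)) ^ d else 0 := by
  have h : ∑ x : Fin d → K, ψ (∑ i, x i * v i)
      = ∑ x ∈ Fintype.piFinset (fun _ : Fin d => (univ : Finset K)), ∏ i, ψ (x i * v i) := by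
    rw [Fintype.piFinset_univ]
    exact Finset.sum_congr rfl fun x _ => psi_map_sum' ψ univ fun i => x i * v i
  rw [h, Finset.sum_prod_piFinset univ (fun i j => ψ (j * v i))]
  by_cases hv : v = 0
  · subst hv
    simp [Finset.card_univ]
  · rw [if_neg hv]
    obtain ⟨i, hi⟩ := Function.ne_iff.mp hv
    refine Finset.prod_eq_zero (Finset.mem_univ i) ?_
    simp only [Pi.zero_apply] at hi
    rw [orth' ψ hψ, if_neg hi]

set_option maxHeartbeats 1000000 in
private lemma key' (d : ℕ) (E F : Finset (Fin d → K)) {t : K} (ht : t ≠ 0) :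
    |(((E ×ˢ F).filter (fun p => ∑ i, p.1 i * p.2 i = t)).card : ℝ) -
        (E.card : ℝ) * (F.card : ℝ) / (Fintype.card K : ℝ)| ≤
      Real.sqrt ((E.card : ℝ) * (F.card : ℝ)) *
        (Fintype.card K : ℝ) ^ (((d : ℝ) - 1) / 2) := by
  obtain ⟨ψ, hψ1⟩ := AddChar.exists_apply_ne_zero.mpr (one_ne_zero (α := K))
  have hψ0 : ψ ≠ 0 := by rintro rfl; exact hψ1 rfl
  have horth := orth' ψ hψ0
  set q : ℕ := Fintype.card K with hqdef
  have hq1 : 1 < q := Fintype.one_lt_card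
  have hq0 : (0:ℝ) < q := by exact_mod_cast Nat.zero_lt_of_lt hq1
  set ν : ℕ := ((E ×ˢ F).filter (fun p => ∑ i, p.1 i * p.2 i = t)).card with hνdef
  set e0 : Finset K := univ.erase 0 with he0
  set g : (Fin d → K) → ℂ :=
    fun x => ∑ s ∈ e0, ∑ y ∈ F, ψ (s * ∑ i, x i * y i) * ψ (-(s * t)) with hg
  have he0mem : ∀ s ∈ e0, s ≠ 0 := fun s hs => (Finset.mem_erase.mp hs).1
  have h1e0 : (1:K) ∈ e0 := Finset.mem_erase.mpr ⟨one_ne_zero, Finset.mem_univ _⟩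
  have hconj : ∀ a : K, (starRingEnd ℂ) (ψ a) = ψ (-a) := fun a => by
    rw [AddChar.map_neg_eq_inv, Complex.inv_eq_conj (AddChar.norm_apply ψ a)]
  have hν : ((ν:ℕ):ℂ) = ∑ x ∈ E, ∑ y ∈ F, (if (∑ i, x i * y i) = t then (1:ℂ) else 0) := by
    have h : ν = ∑ p ∈ E ×ˢ F, (if (∑ i, p.1 i * p.2 i = t) then 1 else 0) :=
      Finset.card_filter _ _
    rw [h]
    push_cast
    rw [Finset.sum_product]
  have key1 : ∀ a : K, ∑ s : K, ψ (s * (a - t)) = (if a = t then (q:ℂ) else 0) := by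
    intro a; rw [horth]; simp [sub_eq_zero]
  have key2 : ∀ a : K, ∑ s : K, ψ (s * (a - t)) = 1 + ∑ s ∈ e0, ψ (s * a) * ψ (-(s * t)) := by
    intro a
    rw [← Finset.add_sum_erase univ _ (Finset.mem_univ (0:K))]
    congr 1
    · simp
    · exact Finset.sum_congr rfl fun s _ => by
        rw [← AddChar.map_add_eq_mul]; congr 1; ring
  have hA : ∑ x ∈ E, g x = (q:ℂ) * ν - (E.card : ℂ) * F.card := by
    have h1 : ∑ x ∈ E, ∑ y ∈ F, ∑ s : K, ψ (s * ((∑ i, x i * y i) - t)) = (q:ℂ) * ν := by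
      simp_rw [key1]
      rw [hν, Finset.mul_sum]
      refine Finset.sum_congr rfl fun x _ => ?_
      rw [Finset.mul_sum]
      exact Finset.sum_congr rfl fun y _ => by split_ifs <;> simp
    have h2 : ∑ x ∈ E, ∑ y ∈ F, ∑ s : K, ψ (s * ((∑ i, x i * y i) - t))
        = (E.card : ℂ) * F.card + ∑ x ∈ E, g x := by
      simp_rw [key2, Finset.sum_add_distrib, Finset.sum_const, nsmul_eq_mul]
      congr 1
      · ring
      · exact Finset.sum_congr rfl fun x _ => Finset.sum_comm
    rw [← h1, h2]; ring
  have horth2 : ∀ a : K, ∑ s ∈ e0, ψ (s * a) = (if a = 0 then (q:ℂ) else 0) - 1 := by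
    intro a
    have h := horth a
    rw [← Finset.add_sum_erase univ _ (Finset.mem_univ (0:K))] at h
    simp only [zero_mul, AddChar.map_zero_eq_one] at h
    rw [← he0] at h
    linear_combination h
  -- second moment
  set M : K → ℕ := fun r => (F.filter (fun y => (fun i => r * y i) ∈ F)).card with hM
  set N : ℕ := ∑ r ∈ e0, M r with hN
  have hM1 : M 1 = F.card := by
    rw [hM]
    simp only [one_mul]
    rw [Finset.filter_true_of_mem (fun y hy => by simpa using hy)]
  set P : Finset (K × (Fin d → K)) := e0 ×ˢ F with hP
  have hgP : ∀ x, g x = ∑ p ∈ P, ψ (p.1 * ∑ i, x i * p.2 i) * ψ (-(p.1 * t)) := by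
    intro x
    rw [hP, Finset.sum_product]
  have hcond : ∀ (s s' : K), s' ≠ 0 → ∀ y y' : Fin d → K,
      ((fun i => s * y i - s' * y' i) = 0) ↔ (y' = fun i => s'⁻¹ * (s * y i)) := by
    intro s s' hs' y y'
    constructor
    · intro h; funext i
      have h2 := congrFun h i
      simp only [Pi.zero_apply] at h2
      field_simp
      linear_combination -h2
    · intro h; subst h; funext i
      simp only [Pi.zero_apply]
      field_simp
      ring
  have hsub : ∀ s ∈ e0, ∀ y : Fin d → K,
      ∑ s' ∈ e0, (if (fun i => s'⁻¹ * (s * y i)) ∈ F then ψ ((s' - s) * t) else 0)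
      = ∑ r ∈ e0, (if (fun i => r * y i) ∈ F then ψ (s * ((r⁻¹ - 1) * t)) else 0) := by
    intro s hs y
    have hs0 := he0mem s hs
    refine Finset.sum_nbij' (i := fun s' => s * s'⁻¹) (j := fun r => s * r⁻¹)
      (fun s' hs' => Finset.mem_erase.mpr
        ⟨mul_ne_zero hs0 (inv_ne_zero (he0mem s' hs')), Finset.mem_univ _⟩)
      (fun r hr => Finset.mem_erase.mpr
        ⟨mul_ne_zero hs0 (inv_ne_zero (he0mem r hr)), Finset.mem_univ _⟩)
      (fun s' hs' => by field_simp)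
      (fun r hr => by field_simp)
      (fun s' hs' => ?_)
    have hs'0 := he0mem s' hs'
    have hf : (fun i => s'⁻¹ * (s * y i)) = (fun i => (s * s'⁻¹) * y i) := by
      funext i; ring
    have ha : (s' - s) * t = s * (((s * s'⁻¹)⁻¹ - 1) * t) := by
      field_simp
    rw [hf, ha]
  have hC : ((∑ x : Fin d → K, ‖g x‖^2 : ℝ) : ℂ) = (q:ℂ)^d * ((q:ℂ) * F.card - N) := by
    have step1 : ((∑ x : Fin d → K, ‖g x‖^2 : ℝ) : ℂ)
        = ∑ x : Fin d → K, g x * (starRingEnd ℂ) (g x) := by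
      push_cast
      refine Finset.sum_congr rfl fun x _ => ?_
      rw [Complex.mul_conj]
      norm_cast
      rw [Complex.normSq_eq_norm_sq]
    have hconjg : ∀ x, (starRingEnd ℂ) (g x)
        = ∑ p ∈ P, ψ (-(p.1 * ∑ i, x i * p.2 i)) * ψ (p.1 * t) := by
      intro x
      rw [hgP x, map_sum (starRingEnd ℂ) _ P]
      refine Finset.sum_congr rfl fun p _ => ?_
      rw [map_mul (starRingEnd ℂ) (ψ (p.1 * ∑ i, x i * p.2 i)) (ψ (-(p.1 * t))),
        hconj, hconj, neg_neg]
    have step2 : ∀ x, g x * (starRingEnd ℂ) (g x)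
        = ∑ p ∈ P, ∑ p' ∈ P,
            (ψ (p.1 * ∑ i, x i * p.2 i) * ψ (-(p.1 * t))) *
            (ψ (-(p'.1 * ∑ i, x i * p'.2 i)) * ψ (p'.1 * t)) := by
      intro x
      rw [hconjg x, hgP x, Finset.sum_mul_sum]
    have step3 : ∀ p p' : K × (Fin d → K),
        ∑ x : Fin d → K,
            (ψ (p.1 * ∑ i, x i * p.2 i) * ψ (-(p.1 * t))) *
            (ψ (-(p'.1 * ∑ i, x i * p'.2 i)) * ψ (p'.1 * t))
        = (if (fun i => p.1 * p.2 i - p'.1 * p'.2 i) = 0 then (q:ℂ)^d else 0) *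
            ψ ((p'.1 - p.1) * t) := by
      intro p p'
      rw [← orthvec' d ψ hψ0 (fun i => p.1 * p.2 i - p'.1 * p'.2 i), Finset.sum_mul]
      refine Finset.sum_congr rfl fun x _ => ?_
      have e1 : ψ (p.1 * ∑ i, x i * p.2 i) * ψ (-(p'.1 * ∑ i, x i * p'.2 i))
          = ψ (∑ i, x i * (p.1 * p.2 i - p'.1 * p'.2 i)) := by
        rw [← AddChar.map_add_eq_mul]
        congr 1
        rw [Finset.mul_sum, Finset.mul_sum, ← sub_eq_add_neg, ← Finset.sum_sub_distrib]
        exact Finset.sum_congr rfl fun i _ => by ring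
      have e2 : ψ (-(p.1 * t)) * ψ (p'.1 * t) = ψ ((p'.1 - p.1) * t) := by
        rw [← AddChar.map_add_eq_mul]; congr 1; ring
      rw [mul_mul_mul_comm, e1, e2]
    have step4 : ((∑ x : Fin d → K, ‖g x‖^2 : ℝ) : ℂ)
        = (q:ℂ)^d * ∑ p ∈ P, ∑ p' ∈ P,
            (if (fun i => p.1 * p.2 i - p'.1 * p'.2 i) = 0 then ψ ((p'.1 - p.1) * t) else 0) := by
      rw [step1]
      simp_rw [step2]
      rw [Finset.sum_comm, Finset.mul_sum]
      refine Finset.sum_congr rfl fun p _ => ?_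
      rw [Finset.sum_comm, Finset.mul_sum]
      refine Finset.sum_congr rfl fun p' _ => ?_
      rw [step3 p p']
      split_ifs with h
      · ring
      · simp
    have step5 : (∑ p ∈ P, ∑ p' ∈ P,
        if (fun i => p.1 * p.2 i - p'.1 * p'.2 i) = 0 then ψ ((p'.1 - p.1) * t) else 0)
        = (F.card:ℂ) * q - N := by
      rw [hP, Finset.sum_product]
      calc ∑ s ∈ e0, ∑ y ∈ F, ∑ p' ∈ e0 ×ˢ F,
            (if (fun i => s * y i - p'.1 * p'.2 i) = 0 then ψ ((p'.1 - s) * t) else 0)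
          = ∑ s ∈ e0, ∑ y ∈ F, ∑ s' ∈ e0, ∑ y' ∈ F,
            (if (fun i => s * y i - s' * y' i) = 0 then ψ ((s' - s) * t) else 0) := by
            refine sum_congr rfl fun s _ => sum_congr rfl fun y _ => ?_
            rw [Finset.sum_product]
        _ = ∑ s ∈ e0, ∑ y ∈ F, ∑ s' ∈ e0,
            (if (fun i => s'⁻¹ * (s * y i)) ∈ F then ψ ((s' - s) * t) else 0) := by
            refine sum_congr rfl fun s _ => sum_congr rfl fun y _ =>
              sum_congr rfl fun s' hs' => ?_
            calc ∑ y' ∈ F, (if (fun i => s * y i - s' * y' i) = 0 then ψ ((s' - s) * t) else 0)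
                = ∑ y' ∈ F, (if y' = (fun i => s'⁻¹ * (s * y i)) then ψ ((s' - s) * t) else 0) :=
                  sum_congr rfl fun y' _ =>
                    if_congr (hcond s s' (he0mem s' hs') y y') rfl rfl
              _ = _ := Finset.sum_ite_eq' F _ (fun _ => ψ ((s' - s) * t))
        _ = ∑ s ∈ e0, ∑ y ∈ F, ∑ r ∈ e0,
            (if (fun i => r * y i) ∈ F then ψ (s * ((r⁻¹ - 1) * t)) else 0) := by
            exact sum_congr rfl fun s hs => sum_congr rfl fun y _ => hsub s hs y
        _ = ∑ y ∈ F, ∑ r ∈ e0, ∑ s ∈ e0,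
            (if (fun i => r * y i) ∈ F then ψ (s * ((r⁻¹ - 1) * t)) else 0) := by
            rw [Finset.sum_comm]
            exact Finset.sum_congr rfl fun y _ => Finset.sum_comm
        _ = ∑ y ∈ F, ∑ r ∈ e0,
            (if (fun i => r * y i) ∈ F then (if r = 1 then (q:ℂ) - 1 else -1) else 0) := by
            refine sum_congr rfl fun y _ => sum_congr rfl fun r hr => ?_
            have hpull : ∑ s ∈ e0, (if (fun i => r * y i) ∈ F then ψ (s * ((r⁻¹ - 1) * t)) else 0)
                = if (fun i => r * y i) ∈ F then ∑ s ∈ e0, ψ (s * ((r⁻¹ - 1) * t)) else 0 := by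
              split_ifs <;> simp
            rw [hpull]
            have hiff : ((r⁻¹ - 1) * t = 0) ↔ r = 1 := by
              rw [mul_eq_zero]
              simp [ht, sub_eq_zero, inv_eq_one]
            by_cases hcF : (fun i => r * y i) ∈ F
            · rw [if_pos hcF, if_pos hcF, horth2 ((r⁻¹ - 1) * t)]
              by_cases hr1 : r = 1
              · rw [if_pos hr1, if_pos (hiff.mpr hr1)]
              · rw [if_neg hr1, if_neg (fun hh => hr1 (hiff.mp hh))]
                ring
            · rw [if_neg hcF, if_neg hcF]
        _ = ∑ r ∈ e0, (M r : ℂ) * (if r = 1 then (q:ℂ) - 1 else -1) := by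
            rw [Finset.sum_comm]
            refine sum_congr rfl fun r _ => ?_
            rw [← Finset.sum_filter, Finset.sum_const, nsmul_eq_mul]
        _ = (F.card:ℂ) * q - N := by
            have he : ∀ r ∈ e0, (M r:ℂ) * (if r = 1 then (q:ℂ) - 1 else -1)
                = (if r = 1 then (M r:ℂ) * q else 0) - M r := by
              intro r _; split_ifs <;> ring
            rw [Finset.sum_congr rfl he, Finset.sum_sub_distrib,
              Finset.sum_ite_eq' e0 1 (fun r => (M r:ℂ) * q), if_pos h1e0, hM1, hN]
            push_cast
            ring
    rw [step4, step5]
    ring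
  have hCr : (∑ x : Fin d → K, ‖g x‖^2) = (q:ℝ)^d * ((q:ℝ) * F.card - N) := by
    have h := hC
    rw [show ((q:ℂ)^d * ((q:ℂ) * F.card - N))
        = (((q:ℝ)^d * ((q:ℝ) * F.card - N) : ℝ) : ℂ) by push_cast; ring] at h
    exact_mod_cast h
  have hB : ∑ x : Fin d → K, ‖g x‖^2 ≤ (q:ℝ)^(d+1) * F.card := by
    rw [hCr]
    have hN0 : (0:ℝ) ≤ N := Nat.cast_nonneg N
    have hqd : (0:ℝ) ≤ (q:ℝ)^d := by positivity
    nlinarith [pow_succ (q:ℝ) d]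
  -- Cauchy–Schwarz
  have hCS : ‖∑ x ∈ E, g x‖^2 ≤ (E.card : ℝ) * ∑ x : Fin d → K, ‖g x‖^2 := by
    have h1 : ‖∑ x ∈ E, g x‖ ≤ ∑ x ∈ E, ‖g x‖ := norm_sum_le _ _
    have h2 : (∑ x ∈ E, ‖g x‖)^2 ≤ (E.card : ℝ) * ∑ x ∈ E, ‖g x‖^2 := by
      have h := Finset.sum_mul_sq_le_sq_mul_sq E (fun _ => (1:ℝ)) (fun x => ‖g x‖)
      simpa using h
    have h3 : ∑ x ∈ E, ‖g x‖^2 ≤ ∑ x : Fin d → K, ‖g x‖^2 :=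
      Finset.sum_le_sum_of_subset_of_nonneg (Finset.subset_univ E) (fun _ _ _ => sq_nonneg _)
    calc ‖∑ x ∈ E, g x‖^2 ≤ (∑ x ∈ E, ‖g x‖)^2 :=
          pow_le_pow_left₀ (norm_nonneg _) h1 2
      _ ≤ (E.card:ℝ) * ∑ x ∈ E, ‖g x‖^2 := h2
      _ ≤ (E.card:ℝ) * ∑ x : Fin d → K, ‖g x‖^2 :=
          mul_le_mul_of_nonneg_left h3 (Nat.cast_nonneg _)
  have habs : |(ν:ℝ) - (E.card:ℝ)*(F.card:ℝ)/(q:ℝ)| = ‖∑ x ∈ E, g x‖ / q := by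
    rw [hA, show ((q:ℂ) * ν - (E.card:ℂ)*F.card)
        = (((q:ℝ) * ν - (E.card:ℝ)*F.card : ℝ) : ℂ) by push_cast; ring,
      Complex.norm_real]
    rw [show (ν:ℝ) - (E.card:ℝ)*(F.card:ℝ)/(q:ℝ) = ((q:ℝ)*ν - (E.card:ℝ)*F.card)/(q:ℝ) by
      field_simp]
    rw [abs_div, abs_of_pos hq0, Real.norm_eq_abs]
  have hL2 : (‖∑ x ∈ E, g x‖/q)^2 ≤ ((E.card:ℝ)*(F.card:ℝ)) * (q:ℝ) ^ ((d:ℝ)-1) := by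
    rw [div_pow, div_le_iff₀ (by positivity)]
    have hqpow : (q:ℝ)^(d+1) = (q:ℝ)^((d:ℝ)-1) * (q:ℝ)^(2:ℕ) := by
      rw [← Real.rpow_natCast (q:ℝ) (d+1), ← Real.rpow_natCast (q:ℝ) 2, ← Real.rpow_add hq0]
      congr 1
      push_cast
      ring
    calc ‖∑ x ∈ E, g x‖^2 ≤ (E.card:ℝ) * ((q:ℝ)^(d+1) * F.card) :=
          le_trans hCS (mul_le_mul_of_nonneg_left hB (Nat.cast_nonneg _))
      _ = (E.card:ℝ)*(F.card:ℝ) * (q:ℝ)^((d:ℝ)-1) * (q:ℝ)^(2:ℕ) := by rw [hqpow]; ring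
  have hBnn : 0 ≤ Real.sqrt ((E.card:ℝ)*(F.card:ℝ)) * (q:ℝ) ^ (((d:ℝ)-1)/2) := by positivity
  have hB2 : (Real.sqrt ((E.card:ℝ)*(F.card:ℝ)) * (q:ℝ)^(((d:ℝ)-1)/2))^2
      = ((E.card:ℝ)*(F.card:ℝ)) * (q:ℝ)^((d:ℝ)-1) := by
    rw [mul_pow, Real.sq_sqrt (by positivity), ← Real.rpow_natCast ((q:ℝ)^(((d:ℝ)-1)/2)) 2,
      ← Real.rpow_mul hq0.le]
    norm_num
  calc |(ν:ℝ) - (E.card:ℝ)*(F.card:ℝ)/(q:ℝ)| = ‖∑ x ∈ E, g x‖ / q := habs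
    _ = Real.sqrt ((‖∑ x ∈ E, g x‖/q)^2) := (Real.sqrt_sq (by positivity)).symm
    _ ≤ Real.sqrt (((E.card:ℝ)*(F.card:ℝ)) * (q:ℝ)^((d:ℝ)-1)) := Real.sqrt_le_sqrt hL2
    _ = Real.sqrt ((E.card:ℝ)*(F.card:ℝ)) * (q:ℝ)^(((d:ℝ)-1)/2) := by
        rw [← hB2, Real.sqrt_sq hBnn]

set_option maxHeartbeats 800000 in
private lemma key2' (d : ℕ) (E F : Finset (Fin d → K))
    (hEF : (E.card : ℝ) * (F.card : ℝ) > (Fintype.card K : ℝ) ^ (d + 1)) :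
    ∀ t : K, t ≠ 0 → ∃ x ∈ E, ∃ y ∈ F, t = ∑ i, x i * y i := by
  intro t ht
  have hq0 : (0:ℝ) < (Fintype.card K : ℝ) := by
    exact_mod_cast Fintype.card_pos
  have hEF0 : (0:ℝ) < (E.card : ℝ) * (F.card : ℝ) := lt_trans (pow_pos hq0 (d+1)) hEF
  have hsqEF0 : 0 < Real.sqrt ((E.card:ℝ)*(F.card:ℝ)) := Real.sqrt_pos.mpr hEF0
  have h1 : Real.sqrt ((Fintype.card K:ℝ)^(d+1)) < Real.sqrt ((E.card:ℝ)*(F.card:ℝ)) :=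
    Real.sqrt_lt_sqrt (le_of_lt (pow_pos hq0 (d+1))) hEF
  have h2 : Real.sqrt ((Fintype.card K:ℝ)^(d+1)) = (Fintype.card K:ℝ)^(((d:ℝ)+1)/2) := by
    rw [Real.sqrt_eq_rpow, ← Real.rpow_natCast (Fintype.card K:ℝ) (d+1),
      ← Real.rpow_mul hq0.le]
    congr 1
    push_cast
    ring
  have hkey : (Fintype.card K:ℝ)^(((d:ℝ)-1)/2)
      < Real.sqrt ((E.card:ℝ)*(F.card:ℝ)) / (Fintype.card K:ℝ) := by
    rw [lt_div_iff₀ hq0]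
    calc (Fintype.card K:ℝ)^(((d:ℝ)-1)/2) * (Fintype.card K:ℝ)
        = (Fintype.card K:ℝ)^(((d:ℝ)-1)/2 + 1) := by rw [Real.rpow_add hq0, Real.rpow_one]
      _ = (Fintype.card K:ℝ)^(((d:ℝ)+1)/2) := by congr 1; ring
      _ = Real.sqrt ((Fintype.card K:ℝ)^(d+1)) := h2.symm
      _ < Real.sqrt ((E.card:ℝ)*(F.card:ℝ)) := h1
  have hsq : Real.sqrt ((E.card:ℝ)*(F.card:ℝ)) * (Fintype.card K:ℝ)^(((d:ℝ)-1)/2)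
      < (E.card:ℝ)*(F.card:ℝ)/(Fintype.card K:ℝ) := by
    calc Real.sqrt ((E.card:ℝ)*(F.card:ℝ)) * (Fintype.card K:ℝ)^(((d:ℝ)-1)/2)
        < Real.sqrt ((E.card:ℝ)*(F.card:ℝ)) *
            (Real.sqrt ((E.card:ℝ)*(F.card:ℝ)) / (Fintype.card K:ℝ)) :=
          mul_lt_mul_of_pos_left hkey hsqEF0
      _ = (E.card:ℝ)*(F.card:ℝ)/(Fintype.card K:ℝ) := by
          rw [div_eq_mul_inv, ← mul_assoc, Real.mul_self_sqrt hEF0.le, ← div_eq_mul_inv]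
  have h := key' d E F ht
  have hν : 0 < (((E ×ˢ F).filter (fun p => ∑ i, p.1 i * p.2 i = t)).card : ℝ) := by
    by_contra hle
    push_neg at hle
    have h0 : (((E ×ˢ F).filter (fun p => ∑ i, p.1 i * p.2 i = t)).card : ℝ) = 0 :=
      le_antisymm hle (Nat.cast_nonneg _)
    rw [h0, zero_sub, abs_neg, abs_of_pos (div_pos hEF0 hq0)] at h
    linarith
  have hpos : 0 < ((E ×ˢ F).filter (fun p => ∑ i, p.1 i * p.2 i = t)).card := by
    exact_mod_cast hν
  obtain ⟨p, hp⟩ := Finset.card_pos.mp hpos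
  rw [Finset.mem_filter] at hp
  obtain ⟨hpEF, hpt⟩ := hp
  rw [Finset.mem_product] at hpEF
  exact ⟨p.1, hpEF.1, p.2, hpEF.2, hpt.symm⟩

end Aux

open Finset in
/-- For `E, F ⊆ F_q^d` and `ν(t) = |{(x,y) ∈ E × F : x·y = t}|`, one has
`|ν(t) - |E||F|/q| ≤ √(|E||F|) · q^((d-1)/2)` for every `t ≠ 0`; in particular, if
`|E||F| > q^(d+1)` then every nonzero `t` is a dot product `x·y` with `x ∈ E`, `y ∈ F`. -/
theorem stmt_15 {K : Type*} [Field K] [Fintype K] [DecidableEq K] (d : ℕ) (hd : 0 < d)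
    (E F : Finset (Fin d → K)) :
    (∀ t : K, t ≠ 0 →
      |(((E ×ˢ F).filter (fun p => ∑ i, p.1 i * p.2 i = t)).card : ℝ) -
          (E.card : ℝ) * (F.card : ℝ) / (Fintype.card K : ℝ)| ≤
        Real.sqrt ((E.card : ℝ) * (F.card : ℝ)) *
          (Fintype.card K : ℝ) ^ (((d : ℝ) - 1) / 2)) ∧
    ((E.card : ℝ) * (F.card : ℝ) > (Fintype.card K : ℝ) ^ (d + 1) →
      ∀ t : K, t ≠ 0 → ∃ x ∈ E, ∃ y ∈ F, t = ∑ i, x i * y i) :=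
  ⟨fun _ ht => key' d E F ht, fun hEF => key2' d E F hEF⟩
end
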